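/- arXiv:1511.04876 — 7 statements merged into one kernel-verified Lean document; each statement's English description precedes it below -/
import Mathlib

section
/- Assume Condition (†). Then for every 𝓙 ⊆ 𝓘 with |𝓙| even and ∅ ≠ 𝓙 ≠ 𝓘, and every ε : 𝓘 → {0,1}, the product ∏_{i∈𝓘} (a·D^𝓙_i)^{ε_i} is a square in ℚ if and only if ε is constant; in particular, the classes of the elements a·D^𝓙_i (i ∈ 𝓘) span an 𝔽₂-subspace of ℚ*/(ℚ*)² of dimension |𝓘| − 1, the only nontrivial relation being that ∏_{i∈𝓘} a·D^𝓙_i is a square. -/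
noncomputable section

/-- The ring of `S`-integers of `ℚ` (the archimedean place is implicit). -/
def ZS (S : Finset ℕ) : Set ℚ :=
  {x : ℚ | ∀ p : ℕ, p.Prime → p ∉ S → 0 ≤ padicValRat p x}

/-- Coprimality in `ℤ_S`: generating the unit ideal. -/
def CoprimeZS (S : Finset ℕ) (c d : ℚ) : Prop :=
  ∃ u v : ℚ, u ∈ ZS S ∧ v ∈ ZS S ∧ u * c + v * d = 1

/-- `p_𝓙(t,s) = ∏_{j ∈ 𝓙} (c_j t + d_j s)`. -/
def pJ {I F : Type*} [Field F] (cc dd : I → ℚ) (J : Finset I) (t s : F) : F :=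
  ∏ j ∈ J, ((cc j : F) * t + (dd j : F) * s)

/-- `D^𝓙_i` (for `e = d`) and `D̂^𝓙_i` (for `e = −d`). -/
def Dgen {I : Type*} [Fintype I] [DecidableEq I] (cc dd : I → ℚ) (e : ℚ)
    (J : Finset I) (i : I) : ℚ :=
  if i ∈ J then e * pJ cc dd Jᶜ (dd i) (-(cc i)) else pJ cc dd J (dd i) (-(cc i))

/-- Condition (†): the classes of `−1` and the `Δ_{i,j}` (for `i < j`) are linearly
independent in `ℚ*/(ℚ*)²` modulo the subgroup generated by the classes of `a` and `b`. -/
def CondDagger {I : Type*} [Fintype I] [LinearOrder I] (cc dd : I → ℚ) (a b : ℚ) : Prop :=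
  ∀ (ε₀ : Bool) (ε : I → I → Bool),
    (∃ (δ₁ δ₂ : Bool) (r : ℚ), r ≠ 0 ∧
      (if ε₀ then (-1 : ℚ) else 1) *
        ∏ ij ∈ Finset.univ.filter (fun ij : I × I => ij.1 < ij.2),
          (if ε ij.1 ij.2 then cc ij.2 * dd ij.1 - cc ij.1 * dd ij.2 else 1) =
        (if δ₁ then a else 1) * (if δ₂ then b else 1) * r ^ 2) →
    ε₀ = false ∧ ∀ i j : I, i < j → ε i j = false


lemma key_identity {I : Type*} [Fintype I] [LinearOrder I]
    (cc dd : I → ℚ) (a b : ℚ) (J : Finset I) (ε : I → Bool) :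
    (∏ i : I, if ε i then a * Dgen cc dd (a * b) J i else 1) =
      a ^ (Finset.univ.filter (fun i => ε i = true)).card *
      (a * b) ^ ((Finset.univ.filter (fun i => ε i = true)).filter (· ∈ J)).card *
      (-1 : ℚ) ^ ((Finset.univ.filter
          (fun p : I × I => (ε p.1 = true ∧ ((p.1 ∈ J) ↔ (p.2 ∉ J))) ∧ p.2 < p.1)).card) *
      (∏ p ∈ Finset.univ.filter (fun p : I × I => p.1 < p.2 ∧ ((p.1 ∈ J) ↔ (p.2 ∉ J))),
        if ε p.1 = true ∧ ε p.2 = true then cc p.2 * dd p.1 - cc p.1 * dd p.2 else 1) ^ 2 *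
      (∏ p ∈ Finset.univ.filter (fun p : I × I => p.1 < p.2 ∧ ((p.1 ∈ J) ↔ (p.2 ∉ J))),
        if ε p.1 ≠ ε p.2 then cc p.2 * dd p.1 - cc p.1 * dd p.2 else 1) := by
  classical
  set Δ : I × I → ℚ := fun p => cc p.2 * dd p.1 - cc p.1 * dd p.2 with hΔdef
  set D := Dgen cc dd (a * b) J with hDdef
  set s : Finset I := Finset.univ.filter (fun i => ε i = true) with hs
  set cut : I × I → Prop := fun p => ((p.1 ∈ J) ↔ (p.2 ∉ J)) with hcut
  set T : Finset (I × I) := Finset.univ.filter (fun p => p.1 < p.2 ∧ cut p) with hT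
  set X : Finset (I × I) := Finset.univ.filter (fun p => ε p.1 = true ∧ cut p) with hX
  set X₁ : Finset (I × I) := X.filter (fun p => p.1 < p.2) with hX1
  set X₂ : Finset (I × I) := X.filter (fun p => p.2 < p.1) with hX2
  set Y : Finset (I × I) := Finset.univ.filter (fun p => p.1 < p.2 ∧ cut p ∧ ε p.2 = true)
    with hY
  have step1 : (∏ i : I, if ε i then a * D i else 1) = ∏ i ∈ s, (a * D i) := by
    rw [hs, Finset.prod_filter]
  have step2 : ∏ i ∈ s, (a * D i) = a ^ s.card * ∏ i ∈ s, D i := by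
    rw [Finset.prod_mul_distrib, Finset.prod_const]
  have step3 : ∏ i ∈ s, D i =
      (∏ i ∈ s.filter (· ∈ J), D i) * ∏ i ∈ s.filter (· ∉ J), D i :=
    (Finset.prod_filter_mul_prod_filter_not s (· ∈ J) D).symm
  have step4 : ∏ i ∈ s.filter (· ∈ J), D i =
      (a * b) ^ (s.filter (· ∈ J)).card * ∏ i ∈ s.filter (· ∈ J), ∏ j ∈ Jᶜ, Δ (i, j) := by
    rw [← Finset.prod_const, ← Finset.prod_mul_distrib]
    refine Finset.prod_congr rfl fun i hi => ?_
    have hiJ : i ∈ J := (Finset.mem_filter.mp hi).2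
    rw [hDdef, Dgen, if_pos hiJ, pJ]
    congr 1
    exact Finset.prod_congr rfl fun j _ => by simp only [hΔdef, Rat.cast_id]; ring
  have step5 : ∏ i ∈ s.filter (· ∉ J), D i =
      ∏ i ∈ s.filter (· ∉ J), ∏ j ∈ J, Δ (i, j) := by
    refine Finset.prod_congr rfl fun i hi => ?_
    have hiJ : i ∉ J := (Finset.mem_filter.mp hi).2
    rw [hDdef, Dgen, if_neg hiJ, pJ]
    exact Finset.prod_congr rfl fun j _ => by simp only [hΔdef, Rat.cast_id]; ring
  have step6 : (∏ i ∈ s.filter (· ∈ J), ∏ j ∈ Jᶜ, Δ (i, j)) *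
      (∏ i ∈ s.filter (· ∉ J), ∏ j ∈ J, Δ (i, j)) = ∏ p ∈ X, Δ p := by
    rw [← Finset.prod_product', ← Finset.prod_product']
    rw [← Finset.prod_union]
    · refine Finset.prod_congr ?_ fun _ _ => rfl
      ext p
      simp only [Finset.mem_union, Finset.mem_product, Finset.mem_filter, hX, hs, hcut,
        Finset.mem_compl, Finset.mem_univ, true_and]
      tauto
    · rw [Finset.disjoint_left]
      intro p hp hp'
      simp only [Finset.mem_product, Finset.mem_filter] at hp hp'
      exact hp'.1.2 hp.1.2
  have step7 : ∏ p ∈ X, Δ p = (∏ p ∈ X₁, Δ p) * ∏ p ∈ X₂, Δ p := by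
    rw [← Finset.prod_filter_mul_prod_filter_not X (fun p => p.1 < p.2) Δ]
    congr 1
    refine Finset.prod_congr (Finset.filter_congr fun p hp => ?_) fun _ _ => rfl
    simp only [hX, Finset.mem_filter, hcut] at hp
    have hne : p.1 ≠ p.2 := by
      intro h; rw [h] at hp; tauto
    simp only [not_lt]
    constructor
    · intro h; exact lt_of_le_of_ne h (by simpa using hne.symm)
    · intro h; exact le_of_lt h
  have step8 : ∏ p ∈ X₂, Δ p = (-1 : ℚ) ^ X₂.card * ∏ p ∈ Y, Δ p := by
    have e1 : ∏ p ∈ X₂, Δ p = ∏ p ∈ X₂, (-1) * Δ p.swap :=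
      Finset.prod_congr rfl fun p _ => by simp only [hΔdef, Prod.fst_swap, Prod.snd_swap]; ring
    rw [e1, Finset.prod_mul_distrib, Finset.prod_const]
    congr 1
    refine Finset.prod_nbij' (fun p => p.swap) (fun p => p.swap) ?_ ?_ ?_ ?_ ?_
    · intro p hp
      simp only [hX2, hX, Finset.mem_filter, Finset.mem_univ, true_and, hcut, hY] at hp ⊢
      exact ⟨hp.2, by tauto, hp.1.1⟩
    · intro p hp
      simp only [hX2, hX, Finset.mem_filter, Finset.mem_univ, true_and, hcut, hY] at hp ⊢
      exact ⟨⟨hp.2.2, by tauto⟩, hp.1⟩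
    · intro p _; exact Prod.swap_swap p
    · intro p _; exact Prod.swap_swap p
    · intro p _; rfl
  have hX1T : X₁ = T.filter (fun p => ε p.1 = true) := by
    ext p
    simp only [hX1, hX, hT, Finset.mem_filter, Finset.mem_univ, true_and]
    tauto
  have hYT : Y = T.filter (fun p => ε p.2 = true) := by
    ext p
    simp only [hY, hT, Finset.mem_filter, Finset.mem_univ, true_and]
    tauto
  have eA : ∏ p ∈ T.filter (fun p => ε p.1 = true), Δ p =
      ∏ p ∈ T, if ε p.1 = true then Δ p else 1 := Finset.prod_filter _ _
  have eB : ∏ p ∈ T.filter (fun p => ε p.2 = true), Δ p =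
      ∏ p ∈ T, if ε p.2 = true then Δ p else 1 := Finset.prod_filter _ _
  have step9 : (∏ p ∈ X₁, Δ p) * ∏ p ∈ Y, Δ p =
      (∏ p ∈ T, if ε p.1 = true ∧ ε p.2 = true then cc p.2 * dd p.1 - cc p.1 * dd p.2 else 1) ^ 2 *
      ∏ p ∈ T, if ε p.1 ≠ ε p.2 then cc p.2 * dd p.1 - cc p.1 * dd p.2 else 1 := by
    rw [hX1T, hYT, eA, eB, ← Finset.prod_mul_distrib, sq, ← Finset.prod_mul_distrib,
      ← Finset.prod_mul_distrib]
    refine Finset.prod_congr rfl fun p _ => ?_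
    have : Δ p = cc p.2 * dd p.1 - cc p.1 * dd p.2 := rfl
    rw [this]
    rcases Bool.eq_false_or_eq_true (ε p.1) with h1 | h1 <;>
      rcases Bool.eq_false_or_eq_true (ε p.2) with h2 | h2 <;>
      simp [h1, h2] <;> ring
  have step456 : ∏ i ∈ s, D i =
      (a * b) ^ (s.filter (· ∈ J)).card * ∏ p ∈ X, Δ p := by
    rw [step3, step4, step5, mul_assoc, step6]
  have hX2card : (Finset.univ.filter
      (fun p : I × I => (ε p.1 = true ∧ ((p.1 ∈ J) ↔ (p.2 ∉ J))) ∧ p.2 < p.1)).card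
      = X₂.card := by
    congr 1
    rw [hX2, hX, Finset.filter_filter]
  rw [step1, step2, step456, step7, step8, hX2card]
  linear_combination (a ^ s.card * (a * b) ^ (s.filter (· ∈ J)).card * (-1 : ℚ) ^ X₂.card) * step9

/-- Lemma 3.8, (1) ⇒ (2): under Condition (†), for every even `𝓙` with `∅ ≠ 𝓙 ≠ 𝓘` the
product `∏_i (a·D^𝓙_i)^{ε_i}` is a square in `ℚ` if and only if `ε` is constant; i.e.
the classes `a·D^𝓙_i` span an `𝔽₂`-space of dimension `|𝓘| − 1` in `ℚ*/(ℚ*)²`, the only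
nontrivial relation being that `∏_i a·D^𝓙_i` is a square. -/

theorem stmt_7 (S₀ : Finset ℕ) (hS₀ : ∀ p ∈ S₀, p.Prime)
    {I : Type*} [Fintype I] [LinearOrder I]
    (hIpos : 0 < Fintype.card I) (hIeven : Even (Fintype.card I))
    (cc dd : I → ℚ) (hcc : ∀ i, cc i ∈ ZS S₀) (hdd : ∀ i, dd i ∈ ZS S₀)
    (hcop : ∀ i, CoprimeZS S₀ (cc i) (dd i))
    (hΔ : ∀ i j : I, i ≠ j → cc j * dd i - cc i * dd j ≠ 0)
    (a b : ℚ) (ha : a ∈ ZS S₀) (hb : b ∈ ZS S₀) (ha0 : a ≠ 0) (hb0 : b ≠ 0)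
    (hdagger : CondDagger cc dd a b) :
    ∀ J : Finset I, Even J.card → J ≠ ∅ → J ≠ Finset.univ →
      ∀ ε : I → Bool,
        (IsSquare (∏ i : I, if ε i then a * Dgen cc dd (a * b) J i else 1) ↔
          ((∀ i, ε i = true) ∨ (∀ i, ε i = false))) := by
  intro J hJeven hJne hJnuniv ε
  classical
  set m := (Finset.univ.filter (fun i => ε i = true)).card with hm
  set k := ((Finset.univ.filter (fun i => ε i = true)).filter (· ∈ J)).card with hk
  set N := (Finset.univ.filter
      (fun p : I × I => (ε p.1 = true ∧ ((p.1 ∈ J) ↔ (p.2 ∉ J))) ∧ p.2 < p.1)).card with hN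
  set Q := (∏ p ∈ Finset.univ.filter (fun p : I × I => p.1 < p.2 ∧ ((p.1 ∈ J) ↔ (p.2 ∉ J))),
      if ε p.1 = true ∧ ε p.2 = true then cc p.2 * dd p.1 - cc p.1 * dd p.2 else 1) with hQ
  set R := (∏ p ∈ Finset.univ.filter (fun p : I × I => p.1 < p.2 ∧ ((p.1 ∈ J) ↔ (p.2 ∉ J))),
      if ε p.1 ≠ ε p.2 then cc p.2 * dd p.1 - cc p.1 * dd p.2 else 1) with hR
  have key : (∏ i : I, if ε i then a * Dgen cc dd (a * b) J i else 1)
      = a ^ m * (a * b) ^ k * (-1 : ℚ) ^ N * Q ^ 2 * R :=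
    key_identity cc dd a b J ε
  have hQ0 : Q ≠ 0 := by
    rw [hQ]
    refine Finset.prod_ne_zero_iff.mpr fun p hp => ?_
    simp only [Finset.mem_filter, Finset.mem_univ, true_and] at hp
    split
    · exact hΔ p.1 p.2 (ne_of_lt hp.1)
    · exact one_ne_zero
  have hR0 : R ≠ 0 := by
    rw [hR]
    refine Finset.prod_ne_zero_iff.mpr fun p hp => ?_
    simp only [Finset.mem_filter, Finset.mem_univ, true_and] at hp
    split
    · exact hΔ p.1 p.2 (ne_of_lt hp.1)
    · exact one_ne_zero
  constructor
  · -- forward direction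
    rintro ⟨r, hr⟩
    have hr0 : r ≠ 0 := by
      intro h0
      rw [h0, mul_zero] at hr
      rw [hr] at key
      exact (mul_ne_zero (mul_ne_zero (mul_ne_zero (mul_ne_zero
        (pow_ne_zero _ ha0) (pow_ne_zero _ (mul_ne_zero ha0 hb0)))
        (pow_ne_zero _ (by norm_num))) (pow_ne_zero _ hQ0)) hR0) key.symm
    have hmain : r ^ 2 = a ^ m * (a * b) ^ k * (-1 : ℚ) ^ N * Q ^ 2 * R := by
      rw [sq, ← hr, key]
    set E : I → I → Bool :=
      fun i j => decide ((((i ∈ J) ↔ (j ∉ J))) ∧ ε i ≠ ε j) with hE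
    have prodE : (∏ ij ∈ Finset.univ.filter (fun ij : I × I => ij.1 < ij.2),
        (if E ij.1 ij.2 then cc ij.2 * dd ij.1 - cc ij.1 * dd ij.2 else 1)) = R := by
      rw [hR, hE]
      rw [Finset.prod_filter, Finset.prod_filter]
      refine Finset.prod_congr rfl fun p _ => ?_
      by_cases h1 : p.1 < p.2
      · by_cases h2 : ((p.1 ∈ J) ↔ (p.2 ∉ J)) ∧ ε p.1 ≠ ε p.2
        · simp [h1, h2, h2.1, h2.2]
        · push_neg at h2
          by_cases h3 : (p.1 ∈ J) ↔ (p.2 ∉ J)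
          · simp [h1, h3, h2 h3]
          · simp [h1, h3]
      · simp [h1]
    have hconc : ∀ i j : I, i < j → E i j = false := by
      have hsign : ∀ (s₀ : ℚ), ((-1 : ℚ) ^ N = s₀ ∧ (s₀ = 1 ∨ s₀ = -1)) →
          True := fun _ _ => trivial
      -- case analysis
      rcases Nat.even_or_odd N with hNe | hNo
      · have hs : (-1 : ℚ) ^ N = 1 := hNe.neg_one_pow
        rw [hs, mul_one] at hmain
        refine (hdagger false E ?_).2
        rw [prodE]
        simp only [Bool.false_eq_true, if_false, one_mul]
        rcases Nat.even_or_odd m with ⟨u, hu⟩ | ⟨u, hu⟩ <;>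
          rcases Nat.even_or_odd k with ⟨v, hv⟩ | ⟨v, hv⟩
        · refine ⟨false, false, r / (a ^ (u + v) * b ^ v * Q), ?_, ?_⟩
          · exact div_ne_zero hr0 (mul_ne_zero (mul_ne_zero (pow_ne_zero _ ha0)
              (pow_ne_zero _ hb0)) hQ0)
          · simp only [Bool.false_eq_true, if_false, one_mul]
            rw [div_pow, hmain, hu, hv]
            field_simp
            ring
        · refine ⟨true, true, r / (a ^ (u + v + 1) * b ^ (v + 1) * Q), ?_, ?_⟩
          · exact div_ne_zero hr0 (mul_ne_zero (mul_ne_zero (pow_ne_zero _ ha0)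
              (pow_ne_zero _ hb0)) hQ0)
          · simp only [if_true]
            rw [div_pow, hmain, hu, hv]
            field_simp
            ring
        · refine ⟨true, false, r / (a ^ (u + v + 1) * b ^ v * Q), ?_, ?_⟩
          · exact div_ne_zero hr0 (mul_ne_zero (mul_ne_zero (pow_ne_zero _ ha0)
              (pow_ne_zero _ hb0)) hQ0)
          · simp only [Bool.false_eq_true, if_false, if_true, mul_one]
            rw [div_pow, hmain, hu, hv]
            field_simp
            ring
        · refine ⟨false, true, r / (a ^ (u + v + 1) * b ^ (v + 1) * Q), ?_, ?_⟩
          · exact div_ne_zero hr0 (mul_ne_zero (mul_ne_zero (pow_ne_zero _ ha0)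
              (pow_ne_zero _ hb0)) hQ0)
          · simp only [Bool.false_eq_true, if_false, if_true, one_mul]
            rw [div_pow, hmain, hu, hv]
            field_simp
            ring
      · have hs : (-1 : ℚ) ^ N = -1 := hNo.neg_one_pow
        rw [hs] at hmain
        refine (hdagger true E ?_).2
        rw [prodE]
        simp only [if_true]
        rcases Nat.even_or_odd m with ⟨u, hu⟩ | ⟨u, hu⟩ <;>
          rcases Nat.even_or_odd k with ⟨v, hv⟩ | ⟨v, hv⟩
        · refine ⟨false, false, r / (a ^ (u + v) * b ^ v * Q), ?_, ?_⟩
          · exact div_ne_zero hr0 (mul_ne_zero (mul_ne_zero (pow_ne_zero _ ha0)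
              (pow_ne_zero _ hb0)) hQ0)
          · simp only [Bool.false_eq_true, if_false, one_mul]
            rw [div_pow, hmain, hu, hv]
            field_simp
            ring
        · refine ⟨true, true, r / (a ^ (u + v + 1) * b ^ (v + 1) * Q), ?_, ?_⟩
          · exact div_ne_zero hr0 (mul_ne_zero (mul_ne_zero (pow_ne_zero _ ha0)
              (pow_ne_zero _ hb0)) hQ0)
          · simp only [if_true]
            rw [div_pow, hmain, hu, hv]
            field_simp
            ring
        · refine ⟨true, false, r / (a ^ (u + v + 1) * b ^ v * Q), ?_, ?_⟩
          · exact div_ne_zero hr0 (mul_ne_zero (mul_ne_zero (pow_ne_zero _ ha0)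
              (pow_ne_zero _ hb0)) hQ0)
          · simp only [Bool.false_eq_true, if_false, if_true, mul_one]
            rw [div_pow, hmain, hu, hv]
            field_simp
            ring
        · refine ⟨false, true, r / (a ^ (u + v + 1) * b ^ (v + 1) * Q), ?_, ?_⟩
          · exact div_ne_zero hr0 (mul_ne_zero (mul_ne_zero (pow_ne_zero _ ha0)
              (pow_ne_zero _ hb0)) hQ0)
          · simp only [Bool.false_eq_true, if_false, if_true, one_mul]
            rw [div_pow, hmain, hu, hv]
            field_simp
            ring
    -- now derive constancy
    have hpair : ∀ i j : I, ((i ∈ J) ↔ (j ∉ J)) → ε i = ε j := by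
      intro i j hij
      have hne : i ≠ j := by
        intro h; subst h; tauto
      rcases lt_or_gt_of_ne hne with h | h
      · have := hconc i j h
        rw [hE] at this
        simp only [decide_eq_false_iff_not, not_and, ne_eq, not_not] at this
        exact this hij
      · have := hconc j i h
        rw [hE] at this
        simp only [decide_eq_false_iff_not, not_and, ne_eq, not_not] at this
        exact (this (by tauto)).symm
    obtain ⟨i₀, hi₀⟩ := Finset.nonempty_iff_ne_empty.mpr hJne
    obtain ⟨j₀, hj₀⟩ : ∃ j, j ∉ J := by
      by_contra h
      push_neg at h
      exact hJnuniv (Finset.eq_univ_iff_forall.mpr h)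
    have h0 : ε i₀ = ε j₀ := hpair i₀ j₀ (iff_of_true hi₀ hj₀)
    have hall : ∀ i, ε i = ε i₀ := by
      intro i
      by_cases hiJ : i ∈ J
      · exact (hpair i j₀ (iff_of_true hiJ hj₀)).trans h0.symm
      · exact (hpair i₀ i (iff_of_true hi₀ hiJ)).symm
    rcases Bool.eq_false_or_eq_true (ε i₀) with h | h
    · exact Or.inl fun i => (hall i).trans h
    · exact Or.inr fun i => (hall i).trans h
  · -- reverse direction
    rintro (hc | hc)
    · -- all true
      rw [key]
      have hRone : R = 1 := by
        rw [hR]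
        exact Finset.prod_eq_one fun p _ => by simp [hc]
      have hmI : m = Fintype.card I := by
        rw [hm]
        simp [hc, Finset.card_univ]
      have hkJ : k = J.card := by
        rw [hk]
        congr 1
        ext i
        simp [hc]
      have hNeven : Even N := by
        have hNcard : N = (J ×ˢ Jᶜ).card := by
          rw [hN]
          refine Finset.card_nbij' (fun p => if p.1 ∈ J then p else p.swap)
            (fun q => if q.2 < q.1 then q else q.swap) ?_ ?_ ?_ ?_
          · intro p hp
            simp only [Finset.mem_coe, Finset.mem_filter, Finset.mem_univ, true_and] at hp
            obtain ⟨⟨-, hcut⟩, hlt⟩ := hp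
            dsimp only
            by_cases h1 : p.1 ∈ J
            · rw [if_pos h1]
              exact Finset.mem_product.mpr ⟨h1, Finset.mem_compl.mpr (hcut.mp h1)⟩
            · rw [if_neg h1]
              refine Finset.mem_product.mpr ⟨?_, ?_⟩ <;>
                simp only [Prod.fst_swap, Prod.snd_swap, Finset.mem_compl] <;> tauto
          · intro q hq
            simp only [Finset.mem_coe, Finset.mem_product, Finset.mem_compl] at hq
            dsimp only
            by_cases h1 : q.2 < q.1
            · rw [if_pos h1]
              simp only [Finset.mem_coe, Finset.mem_filter, Finset.mem_univ, true_and]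
              exact ⟨⟨hc _, iff_of_true hq.1 hq.2⟩, h1⟩
            · have hne : q.1 ≠ q.2 := fun h => hq.2 (h ▸ hq.1)
              have h2 : q.1 < q.2 := lt_of_le_of_ne (not_lt.mp h1) hne
              rw [if_neg h1]
              simp only [Finset.mem_coe, Finset.mem_filter, Finset.mem_univ, true_and,
                Prod.fst_swap, Prod.snd_swap]
              exact ⟨⟨hc _, by tauto⟩, h2⟩
          · intro p hp
            simp only [Finset.mem_coe, Finset.mem_filter, Finset.mem_univ, true_and] at hp
            obtain ⟨⟨-, hcut⟩, hlt⟩ := hp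
            dsimp only
            by_cases h1 : p.1 ∈ J
            · rw [if_pos h1, if_pos hlt]
            · rw [if_neg h1]
              rw [if_neg (by simp only [Prod.fst_swap, Prod.snd_swap, not_lt]; exact le_of_lt hlt),
                Prod.swap_swap]
          · intro q hq
            simp only [Finset.mem_coe, Finset.mem_product, Finset.mem_compl] at hq
            dsimp only
            by_cases h1 : q.2 < q.1
            · rw [if_pos h1, if_pos hq.1]
            · rw [if_neg h1]
              rw [if_neg (by simpa using hq.2), Prod.swap_swap]
        rw [hNcard, Finset.card_product]
        exact hJeven.mul_right _
      obtain ⟨u, hu⟩ := hIeven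
      obtain ⟨v, hv⟩ := hJeven
      obtain ⟨w, hw⟩ := hNeven
      refine IsSquare.mul (IsSquare.mul (IsSquare.mul (IsSquare.mul ?_ ?_) ?_) ⟨Q, sq Q⟩) ?_
      · exact ⟨a ^ u, by rw [hmI, hu, pow_add]⟩
      · exact ⟨(a * b) ^ v, by rw [hkJ, hv, pow_add]⟩
      · exact ⟨(-1 : ℚ) ^ w, by rw [hw, pow_add]⟩
      · rw [hRone]; exact IsSquare.one
    · -- all false
      have : (∏ i : I, if ε i then a * Dgen cc dd (a * b) J i else 1) = 1 := by
        refine Finset.prod_eq_one fun i _ => ?_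
        simp [hc i]
      rw [this]
      exact IsSquare.one
end
end

section
/- Let p ∉ S_0 be an odd prime such that the p-adic valuation of d is 0 and the p-adic valuation of Δ_{i,j} is 0 for all i ≠ j. Let i ∈ 𝓘 and let t, s ∈ ℤ_p, not both in p·ℤ_p, with val_p(p_i(t,s)) > 0. Then there exist x, y ∈ ℤ_p with a·p_𝓐(t,s)·x² + b·p_𝓑(t,s)·y² = 1 if and only if a·D^𝓐_i is a square in ℚ_p. -/
noncomputable section

/-- The field `ℚ_p`, with the primality assumption as an explicit argument. -/
def Qp (p : ℕ) (hp : p.Prime) : Type := @Padic p ⟨hp⟩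

noncomputable instance (p : ℕ) (hp : p.Prime) : NormedField (Qp p hp) :=
  letI : Fact p.Prime := ⟨hp⟩
  inferInstanceAs (NormedField ℚ_[p])

/-- The equation `E : a·p_𝓐(t,s)·x² + b·p_𝓑(t,s)·y² = 1` (with `𝓑 = 𝓐ᶜ`). -/
def EqnE {I : Type*} [Fintype I] [DecidableEq I] {F : Type*} [Field F]
    (cc dd : I → ℚ) (A : Finset I) (a b : ℚ) (t s x y : F) : Prop :=
  (a : F) * pJ cc dd A t s * x ^ 2 + (b : F) * pJ cc dd Aᶜ t s * y ^ 2 = 1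

section Aux

variable {p : ℕ} [Fact p.Prime]

theorem aux_norm_le_one {q : ℚ} (h : 0 ≤ padicValRat p q) : ‖(q : ℚ_[p])‖ ≤ 1 := by
  rcases eq_or_ne q 0 with rfl | hq
  · simp
  · rw [Padic.eq_padicNorm, padicNorm.eq_zpow_of_nonzero hq]
    have hp1 : (1:ℚ) ≤ p := by exact_mod_cast (Fact.out : p.Prime).one_lt.le
    have : ((p:ℚ) ^ (-padicValRat p q) : ℚ) ≤ 1 := by
      calc ((p:ℚ) ^ (-padicValRat p q) : ℚ) ≤ (p:ℚ)^(0:ℤ) := by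
            apply zpow_le_zpow_right₀ hp1; omega
        _ = 1 := zpow_zero _
    exact_mod_cast this

theorem aux_norm_eq_one {q : ℚ} (hq : q ≠ 0) (h : padicValRat p q = 0) :
    ‖(q : ℚ_[p])‖ = 1 := by
  rw [Padic.eq_padicNorm, padicNorm.eq_zpow_of_nonzero hq, h]
  norm_num

theorem aux_norm_eq_of_sub_lt' {x y : ℚ_[p]} (h : ‖x - y‖ < ‖y‖) : ‖x‖ = ‖y‖ := by
  have hne : ‖x - y‖ ≠ ‖y‖ := ne_of_lt h
  have hxy : x = (x - y) + y := by ring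
  rw [hxy, Padic.add_eq_max_of_ne hne, max_eq_right h.le]

theorem aux_sq_of_close_one' (hpodd : p ≠ 2) {w : ℚ_[p]} (h : ‖w - 1‖ < 1) :
    IsSquare w := by
  have hw1 : ‖w‖ = 1 := by simpa using aux_norm_eq_of_sub_lt' (y := 1) (by simpa using h)
  set w' : ℤ_[p] := ⟨w, le_of_eq hw1⟩ with hw'def
  have h2 : ‖(2 : ℤ_[p])‖ = 1 := by
    refine le_antisymm (PadicInt.norm_le_one _) (not_lt.mp ?_)
    intro hlt
    have : ((2:ℤ_[p]) : ℤ_[p]) = ((2:ℤ) : ℤ_[p]) := by norm_cast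
    rw [this, PadicInt.norm_int_lt_one_iff_dvd] at hlt
    have : p ∣ 2 := by exact_mod_cast hlt
    exact hpodd ((Nat.prime_dvd_prime_iff_eq (Fact.out) Nat.prime_two).mp this)
  have key := @hensels_lemma p _ ℤ_[p] _ _ (Polynomial.X ^ 2 - Polynomial.C w') 1 ?_
  · obtain ⟨z, hz, -⟩ := key
    simp only [Polynomial.coe_aeval_eq_eval, Polynomial.eval_sub, Polynomial.eval_pow, Polynomial.eval_X,
      Polynomial.eval_C, sub_eq_zero] at hz
    refine ⟨(z : ℚ_[p]), ?_⟩
    have : ((z^2 : ℤ_[p]) : ℚ_[p]) = ((w' : ℤ_[p]) : ℚ_[p]) := by rw [hz]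
    push_cast at this
    exact this.symm.trans (pow_two _)
  · have hd : (Polynomial.X ^ 2 - Polynomial.C w').derivative = 2 * Polynomial.X := by
      have : Polynomial.C (2:ℤ_[p]) = 2 := map_ofNat Polynomial.C 2
      simp [Polynomial.derivative_pow, this]
    rw [hd]
    simp only [Polynomial.coe_aeval_eq_eval, Polynomial.eval_sub, Polynomial.eval_pow, Polynomial.eval_X,
      Polynomial.eval_C, Polynomial.eval_mul, Polynomial.eval_ofNat, mul_one, one_pow]
    rw [h2]
    have : ‖(1:ℤ_[p]) - w'‖ = ‖(1:ℚ_[p]) - w‖ := rfl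
    rw [this]
    simpa [norm_sub_rev] using h

theorem aux_isSquare_sq_mul {F : Type*} [Field F] {r : F} (hr : r ≠ 0) (x : F) :
    IsSquare (r ^ 2 * x) ↔ IsSquare x := by
  constructor
  · rintro ⟨z, hz⟩
    exact ⟨z / r, by field_simp; linear_combination hz⟩
  · rintro ⟨z, hz⟩
    exact ⟨r * z, by rw [hz]; ring⟩

theorem aux_isSquare_of_close (hpodd : p ≠ 2) {u v : ℚ_[p]} (hu : ‖u‖ = 1)
    (h : ‖u - v‖ < 1) : (IsSquare u ↔ IsSquare v) := by
  have hv : ‖v‖ = 1 := by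
    have : ‖v - u‖ < ‖u‖ := by rw [hu]; rw [norm_sub_rev] at h; exact h
    rw [aux_norm_eq_of_sub_lt' this, hu]
  have hv0 : v ≠ 0 := by intro h0; rw [h0] at hv; simp at hv
  have hdiv : ‖u / v - 1‖ < 1 := by
    rw [show u / v - 1 = (u - v) / v by field_simp]
    rw [norm_div, hv, div_one]; exact h
  obtain ⟨r, hr⟩ := aux_sq_of_close_one' hpodd hdiv
  have hr0 : r ≠ 0 := by
    intro h0; rw [h0, mul_zero] at hr
    have : u = 0 := by field_simp at hr; simpa using hr
    rw [this] at hu; simp at hu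
  have hu_eq : u = r ^ 2 * v := by
    have h2 : u = (u / v) * v := by field_simp
    rw [hr] at h2; rw [h2]; ring
  rw [hu_eq, aux_isSquare_sq_mul hr0]

theorem aux_solv (hpodd : p ≠ 2) {α β : ℚ_[p]} (hα : ‖α‖ < 1) (hβ : ‖β‖ = 1) :
    (∃ x y : ℚ_[p], ‖x‖ ≤ 1 ∧ ‖y‖ ≤ 1 ∧ α * x ^ 2 + β * y ^ 2 = 1) ↔ IsSquare β := by
  constructor
  · rintro ⟨x, y, hx, hy, hxy⟩
    have hsmall : ‖α * x ^ 2‖ < 1 := by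
      calc ‖α * x ^ 2‖ = ‖α‖ * ‖x‖ ^ 2 := by rw [norm_mul, norm_pow]
        _ ≤ ‖α‖ * 1 := by
            apply mul_le_mul_of_nonneg_left _ (norm_nonneg _)
            calc ‖x‖^2 ≤ 1^2 := by apply pow_le_pow_left₀ (norm_nonneg _) hx
              _ = 1 := one_pow _
        _ < 1 := by rw [mul_one]; exact hα
    have heq : β * y ^ 2 = 1 - α * x ^ 2 := by linear_combination hxy
    have hnorm1 : ‖1 - α * x ^ 2‖ = 1 := by
      have : ‖(1 - α * x ^ 2) - 1‖ < ‖(1 : ℚ_[p])‖ := by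
        simpa [norm_sub_rev] using hsmall
      simpa using aux_norm_eq_of_sub_lt' this
    have hsq : IsSquare (1 - α * x ^ 2) := by
      apply aux_sq_of_close_one' hpodd
      simpa using hsmall
    obtain ⟨r, hr⟩ := hsq
    have hy0 : y ≠ 0 := by
      intro h0
      rw [h0] at heq; simp at heq
      rw [← heq] at hnorm1; simp at hnorm1
    refine ⟨r / y, ?_⟩
    have : β * y ^ 2 = r * r := by rw [heq, hr]
    field_simp
    linear_combination this
  · rintro ⟨r, hr⟩
    have hrn : ‖r‖ = 1 := by
      have : ‖β‖ = ‖r‖ * ‖r‖ := by rw [hr, norm_mul]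
      rw [hβ] at this
      nlinarith [norm_nonneg r]
    have hr0 : r ≠ 0 := by intro h0; rw [h0] at hrn; simp at hrn
    refine ⟨0, r⁻¹, by simp, by rw [norm_inv, hrn]; norm_num, ?_⟩
    rw [hr]; field_simp; ring

theorem aux_prod_close {I : Type*} [DecidableEq I] (J : Finset I) (u v : I → ℚ_[p])
    (hu : ∀ j ∈ J, ‖u j‖ ≤ 1) (hv : ∀ j ∈ J, ‖v j‖ ≤ 1)
    (h : ∀ j ∈ J, ‖u j - v j‖ < 1) :
    ‖∏ j ∈ J, u j - ∏ j ∈ J, v j‖ < 1 := by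
  induction J using Finset.induction_on with
  | empty => simp
  | insert c J' hnotmem ih =>
    rw [Finset.prod_insert hnotmem, Finset.prod_insert hnotmem]
    have key : u c * ∏ j ∈ J', u j - v c * ∏ j ∈ J', v j
        = u c * (∏ j ∈ J', u j - ∏ j ∈ J', v j) + (u c - v c) * ∏ j ∈ J', v j := by ring
    rw [key]
    have hQ : ‖∏ j ∈ J', v j‖ ≤ 1 := by
      rw [norm_prod]
      exact Finset.prod_le_one (fun j hj => norm_nonneg _)
        (fun j hj => hv j (Finset.mem_insert_of_mem hj))
    have h1 : ‖u c * (∏ j ∈ J', u j - ∏ j ∈ J', v j)‖ < 1 := by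
      rw [norm_mul]
      calc ‖u c‖ * ‖∏ j ∈ J', u j - ∏ j ∈ J', v j‖ ≤ 1 * ‖∏ j ∈ J', u j - ∏ j ∈ J', v j‖ := by
            apply mul_le_mul_of_nonneg_right (hu c (Finset.mem_insert_self _ _)) (norm_nonneg _)
        _ < 1 := by
            rw [one_mul]
            exact ih (fun j hj => hu j (Finset.mem_insert_of_mem hj))
              (fun j hj => hv j (Finset.mem_insert_of_mem hj))
              (fun j hj => h j (Finset.mem_insert_of_mem hj))
    have h2 : ‖(u c - v c) * ∏ j ∈ J', v j‖ < 1 := by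
      rw [norm_mul]
      calc ‖u c - v c‖ * ‖∏ j ∈ J', v j‖ ≤ ‖u c - v c‖ * 1 :=
            mul_le_mul_of_nonneg_left hQ (norm_nonneg _)
        _ < 1 := by rw [mul_one]; exact h c (Finset.mem_insert_self _ _)
    calc ‖_ + _‖ ≤ max ‖u c * (∏ j ∈ J', u j - ∏ j ∈ J', v j)‖ ‖(u c - v c) * ∏ j ∈ J', v j‖ :=
          Padic.nonarchimedean _ _
      _ < 1 := max_lt h1 h2

end Aux

theorem stmt9' {p : ℕ} [Fact p.Prime] (hpodd : p ≠ 2)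
    (S₀ : Finset ℕ) (hpS : p ∉ S₀)
    {I : Type*} [Fintype I] [DecidableEq I]
    (cc dd : I → ℚ) (hcc : ∀ i, cc i ∈ ZS S₀) (hdd : ∀ i, dd i ∈ ZS S₀)
    (hcop : ∀ i, CoprimeZS S₀ (cc i) (dd i))
    (hΔ : ∀ i j : I, i ≠ j → cc j * dd i - cc i * dd j ≠ 0)
    (a b : ℚ) (ha : a ∈ ZS S₀) (hb : b ∈ ZS S₀) (ha0 : a ≠ 0) (hb0 : b ≠ 0)
    (A : Finset I) (hA : Even A.card) (hB : Even Aᶜ.card)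
    (hvd : padicValRat p (a * b) = 0)
    (hvΔ : ∀ i j : I, i ≠ j → padicValRat p (cc j * dd i - cc i * dd j) = 0)
    (i : I) (t s : ℚ_[p]) (ht : ‖t‖ ≤ 1) (hs : ‖s‖ ≤ 1)
    (hprim : ‖t‖ = 1 ∨ ‖s‖ = 1)
    (hval : ‖(cc i : ℚ_[p]) * t + (dd i : ℚ_[p]) * s‖ < 1) :
    (∃ x y : ℚ_[p], ‖x‖ ≤ 1 ∧ ‖y‖ ≤ 1 ∧ EqnE cc dd A a b t s x y) ↔
      IsSquare ((a * Dgen cc dd (a * b) A i : ℚ) : ℚ_[p]) := by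
  classical
  have hprime : p.Prime := Fact.out
  -- basic norm facts
  have hccle : ∀ j, ‖((cc j : ℚ) : ℚ_[p])‖ ≤ 1 := fun j => aux_norm_le_one (hcc j p hprime hpS)
  have hddle : ∀ j, ‖((dd j : ℚ) : ℚ_[p])‖ ≤ 1 := fun j => aux_norm_le_one (hdd j p hprime hpS)
  have hva : padicValRat p a = 0 ∧ padicValRat p b = 0 := by
    have hmul := padicValRat.mul (p := p) ha0 hb0
    rw [hvd] at hmul
    have h1 := ha p hprime hpS
    have h2 := hb p hprime hpS
    omega
  have ha1 : ‖((a : ℚ) : ℚ_[p])‖ = 1 := aux_norm_eq_one ha0 hva.1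
  have hb1 : ‖((b : ℚ) : ℚ_[p])‖ = 1 := aux_norm_eq_one hb0 hva.2
  have haK : ((a:ℚ):ℚ_[p]) ≠ 0 := by intro h0; rw [h0] at ha1; simp at ha1
  have hΔn : ∀ j, j ≠ i → ‖((cc j * dd i - cc i * dd j : ℚ) : ℚ_[p])‖ = 1 := fun j hj =>
    aux_norm_eq_one (hΔ i j (Ne.symm hj)) (hvΔ i j (Ne.symm hj))
  set C : ℚ_[p] := ((cc i : ℚ) : ℚ_[p]) with hCdef
  set D : ℚ_[p] := ((dd i : ℚ) : ℚ_[p]) with hDdef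
  -- coprimality gives max norm = 1
  have hCD : ‖C‖ = 1 ∨ ‖D‖ = 1 := by
    by_contra hcon
    push_neg at hcon
    obtain ⟨hC, hD⟩ := hcon
    have hC' : ‖C‖ < 1 := lt_of_le_of_ne (hccle i) hC
    have hD' : ‖D‖ < 1 := lt_of_le_of_ne (hddle i) hD
    obtain ⟨u, v, hu, hv, huv⟩ := hcop i
    have hcast : ((u:ℚ):ℚ_[p]) * C + ((v:ℚ):ℚ_[p]) * D = 1 := by
      rw [hCdef, hDdef]; push_cast
      exact_mod_cast congrArg (fun q : ℚ => ((q : ℚ_[p]))) huv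
    have h1 : ‖((u:ℚ):ℚ_[p]) * C + ((v:ℚ):ℚ_[p]) * D‖ < 1 := by
      calc ‖_ + _‖ ≤ max ‖((u:ℚ):ℚ_[p]) * C‖ ‖((v:ℚ):ℚ_[p]) * D‖ := Padic.nonarchimedean _ _
        _ < 1 := by
            apply max_lt
            · rw [norm_mul]
              calc ‖((u:ℚ):ℚ_[p])‖ * ‖C‖ ≤ 1 * ‖C‖ :=
                    mul_le_mul_of_nonneg_right (aux_norm_le_one (hu p hprime hpS)) (norm_nonneg _)
                _ < 1 := by rw [one_mul]; exact hC'
            · rw [norm_mul]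
              calc ‖((v:ℚ):ℚ_[p])‖ * ‖D‖ ≤ 1 * ‖D‖ :=
                    mul_le_mul_of_nonneg_right (aux_norm_le_one (hv p hprime hpS)) (norm_nonneg _)
                _ < 1 := by rw [one_mul]; exact hD'
    rw [hcast] at h1; simp at h1
  -- construct the unit scaling λ (named l)
  obtain ⟨l, hl1, hlt, hls⟩ : ∃ l : ℚ_[p], ‖l‖ = 1 ∧ ‖t - l * D‖ < 1 ∧ ‖s - l * (-C)‖ < 1 := by
    by_cases hD : ‖D‖ = 1
    · have hD0 : D ≠ 0 := by intro h0; rw [h0] at hD; simp at hD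
      have ht1 : ‖t‖ = 1 := by
        rcases hprim with h | h
        · exact h
        · by_contra hne
          have ht' : ‖t‖ < 1 := lt_of_le_of_ne ht hne
          have hCt : ‖C * t‖ < 1 := by
            rw [norm_mul]
            calc ‖C‖ * ‖t‖ ≤ 1 * ‖t‖ := mul_le_mul_of_nonneg_right (hccle i) (norm_nonneg _)
              _ < 1 := by rw [one_mul]; exact ht'
          have hDs : ‖D * s‖ = 1 := by rw [norm_mul, hD, h, one_mul]
          have : ‖C * t + D * s‖ = 1 := by
            rw [Padic.add_eq_max_of_ne (by rw [hDs]; exact ne_of_lt hCt), hDs]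
            exact max_eq_right hCt.le
          rw [this] at hval; simp at hval
      refine ⟨t / D, ?_, ?_, ?_⟩
      · rw [norm_div, ht1, hD]; norm_num
      · have : t - t / D * D = 0 := by field_simp; ring
        rw [this]; simp
      · have : s - t / D * (-C) = (C * t + D * s) / D := by field_simp; ring
        rw [this, norm_div, hD, div_one]; exact hval
    · have hD' : ‖D‖ < 1 := lt_of_le_of_ne (hddle i) hD
      have hC : ‖C‖ = 1 := by tauto
      have hC0 : C ≠ 0 := by intro h0; rw [h0] at hC; simp at hC
      have hs1 : ‖s‖ = 1 := by
        rcases hprim with h | h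
        · by_contra hne
          have hs' : ‖s‖ < 1 := lt_of_le_of_ne hs hne
          have hDs : ‖D * s‖ < 1 := by
            rw [norm_mul]
            calc ‖D‖ * ‖s‖ ≤ ‖D‖ * 1 := mul_le_mul_of_nonneg_left hs (norm_nonneg _)
              _ < 1 := by rw [mul_one]; exact hD'
          have hCt : ‖C * t‖ = 1 := by rw [norm_mul, hC, h, one_mul]
          have : ‖C * t + D * s‖ = 1 := by
            rw [Padic.add_eq_max_of_ne (by rw [hCt]; exact (ne_of_lt hDs).symm), hCt]
            exact max_eq_left hDs.le
          rw [this] at hval; simp at hval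
        · exact h
      refine ⟨-(s / C), ?_, ?_, ?_⟩
      · rw [norm_neg, norm_div, hs1, hC]; norm_num
      · have : t - -(s / C) * D = (C * t + D * s) / C := by field_simp; ring
        rw [this, norm_div, hC, div_one]; exact hval
      · have : s - -(s / C) * (-C) = 0 := by field_simp; ring
        rw [this]; simp

  -- the two comparison families
  set u : I → ℚ_[p] := fun j => ((cc j : ℚ) : ℚ_[p]) * t + ((dd j : ℚ) : ℚ_[p]) * s with hudef
  set v : I → ℚ_[p] := fun j => l * ((cc j * dd i - cc i * dd j : ℚ) : ℚ_[p]) with hvdef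
  have hclose : ∀ j, ‖u j - v j‖ < 1 := by
    intro j
    have hexp : u j - v j = ((cc j : ℚ) : ℚ_[p]) * (t - l * D) + ((dd j : ℚ) : ℚ_[p]) * (s - l * (-C)) := by
      rw [hudef, hvdef, hCdef, hDdef]; push_cast; ring
    rw [hexp]
    calc ‖_ + _‖ ≤ max ‖((cc j : ℚ) : ℚ_[p]) * (t - l * D)‖ ‖((dd j : ℚ) : ℚ_[p]) * (s - l * (-C))‖ :=
          Padic.nonarchimedean _ _
      _ < 1 := by
          apply max_lt
          · rw [norm_mul]
            calc ‖((cc j : ℚ) : ℚ_[p])‖ * ‖t - l * D‖ ≤ 1 * ‖t - l * D‖ :=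
                  mul_le_mul_of_nonneg_right (hccle j) (norm_nonneg _)
              _ < 1 := by rw [one_mul]; exact hlt
          · rw [norm_mul]
            calc ‖((dd j : ℚ) : ℚ_[p])‖ * ‖s - l * (-C)‖ ≤ 1 * ‖s - l * (-C)‖ :=
                  mul_le_mul_of_nonneg_right (hddle j) (norm_nonneg _)
              _ < 1 := by rw [one_mul]; exact hls
  have hvnorm : ∀ j, j ≠ i → ‖v j‖ = 1 := by
    intro j hj
    rw [hvdef]; simp only []
    rw [norm_mul, hl1, hΔn j hj, one_mul]
  have hule : ∀ j, ‖u j‖ ≤ 1 := by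
    intro j
    rw [hudef]; simp only []
    calc ‖_ + _‖ ≤ max ‖((cc j : ℚ) : ℚ_[p]) * t‖ ‖((dd j : ℚ) : ℚ_[p]) * s‖ :=
          Padic.nonarchimedean _ _
      _ ≤ 1 := by
          apply max_le
          · rw [norm_mul]
            exact mul_le_one₀ (hccle j) (norm_nonneg _) ht
          · rw [norm_mul]
            exact mul_le_one₀ (hddle j) (norm_nonneg _) hs
  have hl0 : l ≠ 0 := by intro h0; rw [h0] at hl1; simp at hl1
  -- products over J with i ∉ J
  have hcastpJ : ∀ J : Finset I, ((pJ cc dd J (dd i) (-(cc i)) : ℚ) : ℚ_[p])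
      = ∏ j ∈ J, ((cc j * dd i - cc i * dd j : ℚ) : ℚ_[p]) := by
    intro J
    rw [pJ, Rat.cast_prod]
    refine Finset.prod_congr rfl (fun j hj => ?_)
    push_cast; simp [Rat.cast_id]; ring
  have hprodv : ∀ J : Finset I, ∏ j ∈ J, v j
      = l ^ J.card * ((pJ cc dd J (dd i) (-(cc i)) : ℚ) : ℚ_[p]) := by
    intro J
    rw [hcastpJ J, hvdef]
    simp only []
    rw [Finset.prod_mul_distrib, Finset.prod_const]
  have key : ∀ J : Finset I, i ∉ J → Even J.card → ∀ w : ℚ, ((w:ℚ):ℚ_[p]) ≠ 0 → ‖((w:ℚ):ℚ_[p])‖ = 1 →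
      (‖((w:ℚ):ℚ_[p]) * ∏ j ∈ J, u j‖ = 1 ∧
        (IsSquare (((w:ℚ):ℚ_[p]) * ∏ j ∈ J, u j) ↔
          IsSquare (((w:ℚ):ℚ_[p]) * ((pJ cc dd J (dd i) (-(cc i)) : ℚ) : ℚ_[p])))) := by
    intro J hiJ hJeven w hw0 hw1
    have hvnormJ : ∀ j ∈ J, ‖v j‖ = 1 := fun j hj => hvnorm j (fun h => hiJ (h ▸ hj))
    have hPv : ‖∏ j ∈ J, v j‖ = 1 := by
      rw [norm_prod]
      exact Finset.prod_eq_one (fun j hj => hvnormJ j hj)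
    have hPud : ‖∏ j ∈ J, u j - ∏ j ∈ J, v j‖ < 1 :=
      aux_prod_close J u v (fun j _ => hule j) (fun j hj => (hvnormJ j hj).le)
        (fun j _ => hclose j)
    have hPu : ‖∏ j ∈ J, u j‖ = 1 := by
      have : ‖∏ j ∈ J, u j - ∏ j ∈ J, v j‖ < ‖∏ j ∈ J, v j‖ := by rw [hPv]; exact hPud
      rw [aux_norm_eq_of_sub_lt' this, hPv]
    have hwPu : ‖((w:ℚ):ℚ_[p]) * ∏ j ∈ J, u j‖ = 1 := by rw [norm_mul, hw1, hPu, one_mul]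
    refine ⟨hwPu, ?_⟩
    have hstep1 : IsSquare (((w:ℚ):ℚ_[p]) * ∏ j ∈ J, u j) ↔
        IsSquare (((w:ℚ):ℚ_[p]) * ∏ j ∈ J, v j) := by
      apply aux_isSquare_of_close hpodd hwPu
      rw [show ((w:ℚ):ℚ_[p]) * ∏ j ∈ J, u j - ((w:ℚ):ℚ_[p]) * ∏ j ∈ J, v j
            = ((w:ℚ):ℚ_[p]) * (∏ j ∈ J, u j - ∏ j ∈ J, v j) by ring, norm_mul, hw1, one_mul]
      exact hPud
    rw [hstep1, hprodv J]
    obtain ⟨k, hk⟩ := hJeven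
    have : ((w:ℚ):ℚ_[p]) * (l ^ J.card * ((pJ cc dd J (dd i) (-(cc i)) : ℚ) : ℚ_[p]))
        = (l ^ k) ^ 2 * (((w:ℚ):ℚ_[p]) * ((pJ cc dd J (dd i) (-(cc i)) : ℚ) : ℚ_[p])) := by
      rw [hk, ← pow_mul]
      ring_nf
    rw [this, aux_isSquare_sq_mul (pow_ne_zero k hl0)]
  -- identify pJ over ℚ_[p] with products of u
  have hpJu : ∀ J : Finset I, pJ cc dd J t s = ∏ j ∈ J, u j := fun J => rfl
  have hbK : ((b:ℚ):ℚ_[p]) ≠ 0 := by intro h0; rw [h0] at hb1; simp at hb1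
  by_cases hiA : i ∈ A
  · -- small term is the A-part
    have hiB : i ∉ Aᶜ := by simp [hiA]
    obtain ⟨hβ, hsq⟩ := key Aᶜ hiB hB b hbK hb1
    have hα : ‖((a:ℚ):ℚ_[p]) * pJ cc dd A t s‖ < 1 := by
      rw [norm_mul, ha1, one_mul, hpJu A, norm_prod]
      have herase : ∏ j ∈ A, ‖u j‖ = ‖u i‖ * ∏ j ∈ A.erase i, ‖u j‖ :=
        (Finset.mul_prod_erase A _ hiA).symm
      rw [herase]
      have h1 : ∏ j ∈ A.erase i, ‖u j‖ ≤ 1 :=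
        Finset.prod_le_one (fun j _ => norm_nonneg _) (fun j _ => hule j)
      have hui : ‖u i‖ < 1 := hval
      calc ‖u i‖ * ∏ j ∈ A.erase i, ‖u j‖ ≤ ‖u i‖ * 1 :=
            mul_le_mul_of_nonneg_left h1 (norm_nonneg _)
        _ < 1 := by rw [mul_one]; exact hui
    have hsolv := aux_solv hpodd hα (by rw [← hpJu Aᶜ] at hβ; exact hβ)
    have hlhs : (∃ x y : ℚ_[p], ‖x‖ ≤ 1 ∧ ‖y‖ ≤ 1 ∧ EqnE cc dd A a b t s x y) ↔
        IsSquare (((b:ℚ):ℚ_[p]) * pJ cc dd Aᶜ t s) := by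
      rw [← hsolv]
      constructor
      · rintro ⟨x, y, hx, hy, hxy⟩
        exact ⟨x, y, hx, hy, by rw [EqnE] at hxy; linear_combination hxy⟩
      · rintro ⟨x, y, hx, hy, hxy⟩
        exact ⟨x, y, hx, hy, by rw [EqnE]; linear_combination hxy⟩
    rw [hlhs, hpJu Aᶜ, hsq]
    -- now identify RHS
    have hD : a * Dgen cc dd (a * b) A i = a * ((a * b) * pJ cc dd Aᶜ (dd i) (-(cc i))) := by
      rw [Dgen, if_pos hiA]
    rw [hD]
    have : ((a * (a * b * pJ cc dd Aᶜ (dd i) (-(cc i))) : ℚ) : ℚ_[p])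
        = ((a:ℚ):ℚ_[p]) ^ 2 * (((b:ℚ):ℚ_[p]) * ((pJ cc dd Aᶜ (dd i) (-(cc i)) : ℚ) : ℚ_[p])) := by
      push_cast; ring
    rw [this, aux_isSquare_sq_mul haK]
  · -- small term is the B-part
    obtain ⟨hβ, hsq⟩ := key A hiA hA a haK ha1
    have hiB : i ∈ Aᶜ := by simp [hiA]
    have hα : ‖((b:ℚ):ℚ_[p]) * pJ cc dd Aᶜ t s‖ < 1 := by
      rw [norm_mul, hb1, one_mul, hpJu Aᶜ, norm_prod]
      have herase : ∏ j ∈ Aᶜ, ‖u j‖ = ‖u i‖ * ∏ j ∈ Aᶜ.erase i, ‖u j‖ :=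
        (Finset.mul_prod_erase Aᶜ _ hiB).symm
      rw [herase]
      have h1 : ∏ j ∈ Aᶜ.erase i, ‖u j‖ ≤ 1 :=
        Finset.prod_le_one (fun j _ => norm_nonneg _) (fun j _ => hule j)
      have hui : ‖u i‖ < 1 := hval
      calc ‖u i‖ * ∏ j ∈ Aᶜ.erase i, ‖u j‖ ≤ ‖u i‖ * 1 :=
            mul_le_mul_of_nonneg_left h1 (norm_nonneg _)
        _ < 1 := by rw [mul_one]; exact hui
    have hsolv := aux_solv hpodd hα (by rw [← hpJu A] at hβ; exact hβ)
    have hlhs : (∃ x y : ℚ_[p], ‖x‖ ≤ 1 ∧ ‖y‖ ≤ 1 ∧ EqnE cc dd A a b t s x y) ↔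
        IsSquare (((a:ℚ):ℚ_[p]) * pJ cc dd A t s) := by
      rw [← hsolv]
      constructor
      · rintro ⟨x, y, hx, hy, hxy⟩
        exact ⟨y, x, hy, hx, by rw [EqnE] at hxy; linear_combination hxy⟩
      · rintro ⟨x, y, hx, hy, hxy⟩
        exact ⟨y, x, hy, hx, by rw [EqnE]; linear_combination hxy⟩
    rw [hlhs, hpJu A, hsq]
    have hD : a * Dgen cc dd (a * b) A i = a * pJ cc dd A (dd i) (-(cc i)) := by
      rw [Dgen, if_neg hiA]
    rw [hD]
    push_cast
    rfl


/-- Lemma 3.15 (`l:fiber`): for a good odd prime `p` and `(t,s)` primitive in `ℤ_p²`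
reducing to the zero locus of `p_i`, the fiber has an integral `ℤ_p`-point
if and only if `a·D^𝓐_i` is a square in `ℚ_p`. -/
theorem stmt_9 (S₀ : Finset ℕ) (hS₀ : ∀ p ∈ S₀, p.Prime)
    {I : Type*} [Fintype I] [DecidableEq I]
    (hIpos : 0 < Fintype.card I) (hIeven : Even (Fintype.card I))
    (cc dd : I → ℚ) (hcc : ∀ i, cc i ∈ ZS S₀) (hdd : ∀ i, dd i ∈ ZS S₀)
    (hcop : ∀ i, CoprimeZS S₀ (cc i) (dd i))
    (hΔ : ∀ i j : I, i ≠ j → cc j * dd i - cc i * dd j ≠ 0)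
    (a b : ℚ) (ha : a ∈ ZS S₀) (hb : b ∈ ZS S₀) (ha0 : a ≠ 0) (hb0 : b ≠ 0)
    (A : Finset I) (hA : Even A.card) (hB : Even Aᶜ.card)
    (p : ℕ) (hp : p.Prime) (hpodd : p ≠ 2) (hpS : p ∉ S₀)
    (hvd : padicValRat p (a * b) = 0)
    (hvΔ : ∀ i j : I, i ≠ j → padicValRat p (cc j * dd i - cc i * dd j) = 0)
    (i : I) (t s : Qp p hp) (ht : ‖t‖ ≤ 1) (hs : ‖s‖ ≤ 1)
    (hprim : ‖t‖ = 1 ∨ ‖s‖ = 1)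
    (hval : ‖(cc i : Qp p hp) * t + (dd i : Qp p hp) * s‖ < 1) :
    (∃ x y : Qp p hp, ‖x‖ ≤ 1 ∧ ‖y‖ ≤ 1 ∧ EqnE cc dd A a b t s x y) ↔
      IsSquare ((a * Dgen cc dd (a * b) A i : ℚ) : Qp p hp) := by
  haveI : Fact p.Prime := ⟨hp⟩
  exact stmt9' hpodd S₀ hpS cc dd hcc hdd hcop hΔ a b ha hb ha0 hb0 A hA hB hvd hvΔ
    i t s ht hs hprim hval
end
end

section
/- Let p ∉ S_0 be an odd prime such that the p-adic valuation of d is 0 and the p-adic valuation of Δ_{i,j} is 0 for all i ≠ j. Let (t,s,x,y) ∈ ℤ_p⁴ with t, s not both in p·ℤ_p satisfy a·p_𝓐(t,s)·x² + b·p_𝓑(t,s)·y² = 1. Then for every i ∈ 𝓘, either a·D^𝓐_i is a square in ℚ_p or val_p(p_i(t,s)) = 0; in particular val_p(p_i(t,s)) is even whenever a·D^𝓐_i is not a square in ℚ_p. -/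
noncomputable section

/-- The `p`-adic valuation of an element of `ℚ_p`. -/
noncomputable def QpVal (p : ℕ) (hp : p.Prime) (x : Qp p hp) : ℤ :=
  letI : Fact p.Prime := ⟨hp⟩
  Padic.valuation (x : ℚ_[p])




section helpers
variable {p : ℕ} [Fact p.Prime]
lemma norm_ratCast_le_one (q : ℚ) (h : q ≠ 0 → 0 ≤ padicValRat p q) : ‖(q : ℚ_[p])‖ ≤ 1 := by
  rcases eq_or_ne q 0 with rfl | hq
  · simp
  · rw [Padic.eq_padicNorm]
    have h1 : padicNorm p q ≤ 1 := by
      rw [padicNorm.eq_zpow_of_nonzero hq]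
      exact zpow_le_one_of_nonpos₀ (by exact_mod_cast (Fact.out : p.Prime).one_lt.le)
        (neg_nonpos.mpr (h hq))
    exact_mod_cast h1

lemma norm_ratCast_eq_one (q : ℚ) (hq : q ≠ 0) (h : padicValRat p q = 0) :
    ‖(q : ℚ_[p])‖ = 1 := by
  rw [Padic.eq_padicNorm]
  have h1 : padicNorm p q = 1 := by
    rw [padicNorm.eq_zpow_of_nonzero hq, h]; norm_num
  exact_mod_cast h1

lemma norm_one_of_near_one {z : ℚ_[p]} (h : ‖1 - z‖ < 1) : ‖z‖ = 1 := by
  refine le_antisymm ?_ ?_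
  · calc ‖z‖ = ‖(1 - z) * (-1) + 1‖ := by ring_nf
    _ ≤ max ‖(1 - z) * (-1)‖ ‖(1 : ℚ_[p])‖ := Padic.nonarchimedean _ _
    _ ≤ 1 := by rw [norm_mul, norm_neg, norm_one]; simp [h.le]
  · by_contra hlt
    push_neg at hlt
    have := Padic.nonarchimedean (1 - z) z
    simp only [sub_add_cancel, norm_one] at this
    have : (1:ℝ) < 1 := lt_of_le_of_lt this (max_lt h hlt)
    exact absurd this (lt_irrefl _)

lemma norm_two_eq_one (hp2 : p ≠ 2) : ‖(2 : ℤ_[p])‖ = 1 := by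
  refine le_antisymm (PadicInt.norm_le_one _) ?_
  by_contra hlt
  push_neg at hlt
  have h2 : ((2:ℤ) : ℤ_[p]) = (2 : ℤ_[p]) := by push_cast; ring
  rw [← h2, PadicInt.norm_int_lt_one_iff_dvd] at hlt
  have : p ∣ 2 := by exact_mod_cast hlt
  exact hp2 ((Nat.prime_dvd_prime_iff_eq (Fact.out : p.Prime) Nat.prime_two).mp this)

open Polynomial in
lemma unit_isSquare (hp2 : p ≠ 2) {v : ℚ_[p]} (hv : ‖v - 1‖ < 1) : IsSquare v := by
  have hv1 : ‖v‖ = 1 := norm_one_of_near_one (by rwa [norm_sub_rev] at hv)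
  set u : ℤ_[p] := ⟨v, hv1.le⟩ with hu
  have hcast : ((u : ℤ_[p]) : ℚ_[p]) = v := rfl
  set F : Polynomial ℤ_[p] := X ^ 2 - C u with hF
  have hFe : ∀ z : ℤ_[p], F.eval z = z ^ 2 - u := by intro z; simp [hF]
  have hFd : F.derivative = C 2 * X := by
    simp [hF, derivative_sub, derivative_X_pow]; rw [map_ofNat, one_add_one_eq_two]
  have hde : F.derivative.eval 1 = 2 := by rw [hFd]; simp
  have hnorm : ‖F.eval 1‖ < ‖F.derivative.eval 1‖ ^ 2 := by
    rw [hde, norm_two_eq_one hp2, one_pow, hFe]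
    rw [PadicInt.norm_def]
    have : (((1:ℤ_[p]) ^ 2 - u : ℤ_[p]) : ℚ_[p]) = 1 - v := by push_cast [hcast]; ring
    rw [this, norm_sub_rev]
    exact hv
  obtain ⟨z, hz, -⟩ := hensels_lemma hnorm
  rw [Polynomial.coe_aeval_eq_eval, hFe, sub_eq_zero] at hz
  refine ⟨(z : ℚ_[p]), ?_⟩
  have : ((z ^ 2 : ℤ_[p]) : ℚ_[p]) = v := by rw [hz, hcast]
  push_cast at this
  rw [← this]; ring

lemma near_sq_isSquare (hp2 : p ≠ 2) {u w : ℚ_[p]} (hw : ‖w‖ = 1) (h : ‖u - w ^ 2‖ < 1) :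
    IsSquare u := by
  have hw0 : w ≠ 0 := by intro h0; rw [h0] at hw; simp at hw
  have h2 : ‖u / w ^ 2 - 1‖ < 1 := by
    have : u / w ^ 2 - 1 = (u - w ^ 2) / w ^ 2 := by field_simp
    rw [this, norm_div, norm_pow, hw]
    simpa using h
  obtain ⟨r, hr⟩ := unit_isSquare hp2 h2
  exact ⟨w * r, by field_simp at hr ⊢; rw [hr]⟩

lemma prod_approx {ι : Type*} (J : Finset ι) (f g : ι → ℚ_[p])
    (hf : ∀ j ∈ J, ‖f j‖ ≤ 1) (hg : ∀ j ∈ J, ‖g j‖ ≤ 1)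
    (h : ∀ j ∈ J, ‖f j - g j‖ < 1) :
    ‖∏ j ∈ J, f j - ∏ j ∈ J, g j‖ < 1 := by
  classical
  induction J using Finset.cons_induction with
  | empty => simp
  | cons i J hi ih =>
    simp only [Finset.prod_cons]
    have hPf : ‖∏ j ∈ J, f j‖ ≤ 1 := by
      rw [norm_prod]
      exact Finset.prod_le_one (fun j _ => norm_nonneg _) (fun j hj => hf j (Finset.mem_cons_of_mem hj))
    have hPg : ‖∏ j ∈ J, g j‖ ≤ 1 := by
      rw [norm_prod]
      exact Finset.prod_le_one (fun j _ => norm_nonneg _) (fun j hj => hg j (Finset.mem_cons_of_mem hj))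
    have key : f i * ∏ j ∈ J, f j - g i * ∏ j ∈ J, g j
        = f i * (∏ j ∈ J, f j - ∏ j ∈ J, g j) + (f i - g i) * ∏ j ∈ J, g j := by ring
    rw [key]
    refine lt_of_le_of_lt (Padic.nonarchimedean _ _) (max_lt ?_ ?_)
    · rw [norm_mul]
      calc ‖f i‖ * ‖∏ j ∈ J, f j - ∏ j ∈ J, g j‖
          ≤ 1 * ‖∏ j ∈ J, f j - ∏ j ∈ J, g j‖ := by
            apply mul_le_mul_of_nonneg_right (hf i (Finset.mem_cons_self _ _)) (norm_nonneg _)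
        _ < 1 := by
            rw [one_mul]
            exact ih (fun j hj => hf j (Finset.mem_cons_of_mem hj))
              (fun j hj => hg j (Finset.mem_cons_of_mem hj))
              (fun j hj => h j (Finset.mem_cons_of_mem hj))
    · rw [norm_mul]
      calc ‖f i - g i‖ * ‖∏ j ∈ J, g j‖ ≤ ‖f i - g i‖ * 1 :=
            mul_le_mul_of_nonneg_left hPg (norm_nonneg _)
        _ < 1 := by rw [mul_one]; exact h i (Finset.mem_cons_self _ _)

lemma key_lemma (n : ℕ) (β Y Q y lam : ℚ_[p])
    (hβ : ‖β‖ = 1) (hQ : ‖Q‖ = 1) (hlam : ‖lam‖ = 1) (hy : ‖y‖ ≤ 1)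
    (hE : ‖1 - β * Y * y ^ 2‖ < 1) (hYQ : ‖Y - lam ^ (2 * n) * Q‖ < 1)
    (hsq : ∀ u w : ℚ_[p], ‖w‖ = 1 → ‖u - w ^ 2‖ < 1 → IsSquare u) :
    IsSquare (β * Q) := by
  have h1 : ‖1 - β * lam ^ (2 * n) * Q * y ^ 2‖ < 1 := by
    have hdecomp : 1 - β * lam ^ (2 * n) * Q * y ^ 2
        = (1 - β * Y * y ^ 2) + β * y ^ 2 * (Y - lam ^ (2 * n) * Q) := by ring
    rw [hdecomp]
    refine lt_of_le_of_lt (Padic.nonarchimedean _ _) (max_lt hE ?_)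
    rw [norm_mul, norm_mul, norm_pow, hβ, one_mul]
    calc ‖y‖ ^ 2 * ‖Y - lam ^ (2 * n) * Q‖ ≤ 1 * ‖Y - lam ^ (2 * n) * Q‖ := by
          apply mul_le_mul_of_nonneg_right _ (norm_nonneg _)
          exact pow_le_one₀ (norm_nonneg _) hy
      _ < 1 := by rw [one_mul]; exact hYQ
  have hz1 : ‖β * lam ^ (2 * n) * Q * y ^ 2‖ = 1 := norm_one_of_near_one h1
  have hy1 : ‖y‖ = 1 := by
    rw [norm_mul, norm_mul, norm_mul, norm_pow, norm_pow, hβ, hlam, hQ] at hz1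
    simp only [one_pow, one_mul, mul_one] at hz1
    nlinarith [norm_nonneg y, sq_nonneg (‖y‖ - 1), sq_nonneg (‖y‖ + 1)]
  have hy0 : y ≠ 0 := by intro h; rw [h] at hy1; simp at hy1
  have hlam0 : lam ≠ 0 := by intro h; rw [h] at hlam; simp at hlam
  set w : ℚ_[p] := (lam ^ n * y)⁻¹ with hw
  have hwn : ‖w‖ = 1 := by
    rw [hw, norm_inv, norm_mul, norm_pow, hlam, hy1]; norm_num
  refine hsq _ w hwn ?_
  have hrw : β * Q - w ^ 2 = w ^ 2 * ((β * lam ^ (2 * n) * Q * y ^ 2) - 1) := by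
    rw [hw]
    field_simp
    ring
  rw [hrw, norm_mul, norm_pow, hwn, one_pow, one_mul, norm_sub_rev]
  exact h1
lemma norm_sub_le_max (A B : ℚ_[p]) : ‖A - B‖ ≤ max ‖A‖ ‖B‖ := by
  rw [sub_eq_add_neg]
  refine le_trans (Padic.nonarchimedean _ _) ?_
  rw [norm_neg]

lemma cast_pJ {I : Type*} (cc dd : I → ℚ) (J : Finset I) (t s : ℚ) :
    ((pJ cc dd J t s : ℚ) : ℚ_[p]) = pJ cc dd J (t : ℚ_[p]) (s : ℚ_[p]) := by
  rw [pJ, pJ]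
  simp only [Rat.cast_id]
  have h := map_prod (Rat.castHom ℚ_[p]) (fun j => (cc j : ℚ) * t + dd j * s) J
  simp only [Rat.coe_castHom] at h
  rw [show ((∏ j ∈ J, ((cc j : ℚ) * t + dd j * s) : ℚ) : ℚ_[p])
      = ∏ j ∈ J, (((cc j : ℚ) * t + dd j * s : ℚ) : ℚ_[p]) from h]
  refine Finset.prod_congr rfl fun j _ => by push_cast; ring

lemma main_aux (hp2 : p ≠ 2)
    {I : Type*} [Fintype I] [DecidableEq I] (cc dd : I → ℚ)
    (A : Finset I) (k l : ℕ) (hAc : A.card = 2 * k) (hBc : Aᶜ.card = 2 * l)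
    (a b : ℚ)
    (hna : ‖(a : ℚ_[p])‖ = 1) (hnb : ‖(b : ℚ_[p])‖ = 1)
    (hc1 : ∀ i, ‖((cc i : ℚ) : ℚ_[p])‖ ≤ 1) (hd1 : ∀ i, ‖((dd i : ℚ) : ℚ_[p])‖ ≤ 1)
    (hcd : ∀ i, ‖((cc i : ℚ) : ℚ_[p])‖ = 1 ∨ ‖((dd i : ℚ) : ℚ_[p])‖ = 1)
    (hΔn : ∀ i j, i ≠ j → ‖((cc j * dd i - cc i * dd j : ℚ) : ℚ_[p])‖ = 1)
    (t s x y : ℚ_[p]) (ht : ‖t‖ ≤ 1) (hs : ‖s‖ ≤ 1) (hx : ‖x‖ ≤ 1) (hy : ‖y‖ ≤ 1)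
    (hprim : ‖t‖ = 1 ∨ ‖s‖ = 1)
    (heq : (a : ℚ_[p]) * pJ cc dd A t s * x ^ 2 + (b : ℚ_[p]) * pJ cc dd Aᶜ t s * y ^ 2 = 1)
    (hsq : ∀ u w : ℚ_[p], ‖w‖ = 1 → ‖u - w ^ 2‖ < 1 → IsSquare u)
    (i : I) (hi : ‖(cc i : ℚ_[p]) * t + (dd i : ℚ_[p]) * s‖ < 1) :
    IsSquare (((a * Dgen cc dd (a * b) A i : ℚ)) : ℚ_[p]) := by
  classical
  -- all linear forms have norm ≤ 1
  have hpj : ∀ j : I, ‖(cc j : ℚ_[p]) * t + (dd j : ℚ_[p]) * s‖ ≤ 1 := by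
    intro j
    refine le_trans (Padic.nonarchimedean _ _) (max_le ?_ ?_)
    · rw [norm_mul]
      exact mul_le_one₀ (hc1 j) (norm_nonneg _) ht
    · rw [norm_mul]
      exact mul_le_one₀ (hd1 j) (norm_nonneg _) hs
  -- construct lambda
  obtain ⟨lam, hlam, hT, hS⟩ : ∃ lam : ℚ_[p], ‖lam‖ = 1 ∧
      ‖t - lam * (dd i : ℚ_[p])‖ < 1 ∧ ‖s + lam * (cc i : ℚ_[p])‖ < 1 := by
    rcases hcd i with hc | hd
    · -- cc i is a unit; then ‖s‖ = 1
      have hsn : ‖s‖ = 1 := by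
        rcases hprim with h1 | h1
        ·
          by_contra hne
          have hslt : ‖s‖ < 1 := lt_of_le_of_ne hs hne
          have : ‖(cc i : ℚ_[p]) * t‖ < 1 := by
            have hd2 : (cc i : ℚ_[p]) * t = ((cc i : ℚ_[p]) * t + (dd i : ℚ_[p]) * s) - (dd i : ℚ_[p]) * s := by ring
            rw [hd2]
            refine lt_of_le_of_lt (norm_sub_le_max _ _) (max_lt hi ?_)
            rw [norm_mul]
            calc ‖((dd i : ℚ) : ℚ_[p])‖ * ‖s‖ ≤ 1 * ‖s‖ :=
                  mul_le_mul_of_nonneg_right (hd1 i) (norm_nonneg _)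
              _ < 1 := by rw [one_mul]; exact hslt
          rw [norm_mul, hc, one_mul] at this
          rw [h1] at this; exact absurd this (lt_irrefl _)
        · exact h1
      have hc0 : ((cc i : ℚ) : ℚ_[p]) ≠ 0 := by
        intro h0; rw [h0] at hc; simp at hc
      refine ⟨-(s / (cc i : ℚ_[p])), ?_, ?_, ?_⟩
      · rw [norm_neg, norm_div, hsn, hc]; norm_num
      · have : t - -(s / (cc i : ℚ_[p])) * (dd i : ℚ_[p])
            = ((cc i : ℚ_[p]) * t + (dd i : ℚ_[p]) * s) / (cc i : ℚ_[p]) := by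
          field_simp; ring
        rw [this, norm_div, hc, div_one]; exact hi
      · have h0 : s + -(s / (cc i : ℚ_[p])) * (cc i : ℚ_[p]) = 0 := by field_simp; ring
        rw [h0, norm_zero]; exact one_pos
    · -- dd i is a unit; then ‖t‖ = 1
      have htn : ‖t‖ = 1 := by
        rcases hprim with h1 | h1
        · exact h1
        · by_contra hne
          have htlt : ‖t‖ < 1 := lt_of_le_of_ne ht hne
          have : ‖(dd i : ℚ_[p]) * s‖ < 1 := by
            have hd2 : (dd i : ℚ_[p]) * s = ((cc i : ℚ_[p]) * t + (dd i : ℚ_[p]) * s) - (cc i : ℚ_[p]) * t := by ring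
            rw [hd2]
            refine lt_of_le_of_lt (norm_sub_le_max _ _) (max_lt hi ?_)
            rw [norm_mul]
            calc ‖((cc i : ℚ) : ℚ_[p])‖ * ‖t‖ ≤ 1 * ‖t‖ :=
                  mul_le_mul_of_nonneg_right (hc1 i) (norm_nonneg _)
              _ < 1 := by rw [one_mul]; exact htlt
          rw [norm_mul, hd, one_mul] at this
          rw [h1] at this; exact absurd this (lt_irrefl _)
      have hd0 : ((dd i : ℚ) : ℚ_[p]) ≠ 0 := by
        intro h0; rw [h0] at hd; simp at hd
      refine ⟨t / (dd i : ℚ_[p]), ?_, ?_, ?_⟩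
      · rw [norm_div, htn, hd]; norm_num
      · have h0 : t - t / (dd i : ℚ_[p]) * (dd i : ℚ_[p]) = 0 := by field_simp; ring
        rw [h0, norm_zero]; exact one_pos
      · have : s + t / (dd i : ℚ_[p]) * (cc i : ℚ_[p])
            = ((cc i : ℚ_[p]) * t + (dd i : ℚ_[p]) * s) / (dd i : ℚ_[p]) := by
          field_simp; ring
        rw [this, norm_div, hd, div_one]; exact hi
  -- approximation of each linear form
  have happrox : ∀ j : I, ‖((cc j : ℚ_[p]) * t + (dd j : ℚ_[p]) * s)
      - lam * ((cc j : ℚ_[p]) * (dd i : ℚ_[p]) + (dd j : ℚ_[p]) * (-(cc i : ℚ_[p])))‖ < 1 := by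
    intro j
    have hd2 : ((cc j : ℚ_[p]) * t + (dd j : ℚ_[p]) * s)
        - lam * ((cc j : ℚ_[p]) * (dd i : ℚ_[p]) + (dd j : ℚ_[p]) * (-(cc i : ℚ_[p])))
        = (cc j : ℚ_[p]) * (t - lam * (dd i : ℚ_[p]))
          + (dd j : ℚ_[p]) * (s + lam * (cc i : ℚ_[p])) := by ring
    rw [hd2]
    refine lt_of_le_of_lt (Padic.nonarchimedean _ _) (max_lt ?_ ?_)
    · rw [norm_mul]
      calc ‖((cc j : ℚ) : ℚ_[p])‖ * ‖t - lam * (dd i : ℚ_[p])‖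
          ≤ 1 * ‖t - lam * (dd i : ℚ_[p])‖ :=
            mul_le_mul_of_nonneg_right (hc1 j) (norm_nonneg _)
        _ < 1 := by rw [one_mul]; exact hT
    · rw [norm_mul]
      calc ‖((dd j : ℚ) : ℚ_[p])‖ * ‖s + lam * (cc i : ℚ_[p])‖
          ≤ 1 * ‖s + lam * (cc i : ℚ_[p])‖ :=
            mul_le_mul_of_nonneg_right (hd1 j) (norm_nonneg _)
        _ < 1 := by rw [one_mul]; exact hS
  -- norm-1 of the specialized forms
  have hQnorm : ∀ j : I, j ≠ i →
      ‖(cc j : ℚ_[p]) * (dd i : ℚ_[p]) + (dd j : ℚ_[p]) * (-(cc i : ℚ_[p]))‖ = 1 := by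
    intro j hj
    have : (cc j : ℚ_[p]) * (dd i : ℚ_[p]) + (dd j : ℚ_[p]) * (-(cc i : ℚ_[p]))
        = ((cc j * dd i - cc i * dd j : ℚ) : ℚ_[p]) := by push_cast; ring
    rw [this]
    exact hΔn i j (fun h => hj h.symm)
  -- product approximation for a set avoiding i
  have hJ : ∀ J : Finset I, i ∉ J →
      ‖pJ cc dd J t s - lam ^ J.card * pJ cc dd J ((dd i : ℚ) : ℚ_[p]) (-((cc i : ℚ) : ℚ_[p]))‖ < 1 := by
    intro J hiJ
    have hprod : (∏ j ∈ J, (lam * ((cc j : ℚ_[p]) * (dd i : ℚ_[p]) + (dd j : ℚ_[p]) * (-(cc i : ℚ_[p])))))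
        = lam ^ J.card * pJ cc dd J ((dd i : ℚ) : ℚ_[p]) (-((cc i : ℚ) : ℚ_[p])) := by
      rw [Finset.prod_mul_distrib, Finset.prod_const, pJ]
    rw [pJ, ← hprod]
    refine prod_approx J _ _ (fun j _ => hpj j) ?_ (fun j _ => happrox j)
    intro j hj
    rw [norm_mul, hlam, one_mul, hQnorm j (fun h => hiJ (h ▸ hj))]
  -- norm 1 of specialized products
  have hQn : ∀ J : Finset I, i ∉ J →
      ‖pJ cc dd J ((dd i : ℚ) : ℚ_[p]) (-((cc i : ℚ) : ℚ_[p]))‖ = 1 := by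
    intro J hiJ
    rw [pJ, norm_prod]
    refine Finset.prod_eq_one ?_
    intro j hj
    exact hQnorm j (fun h => hiJ (h ▸ hj))
  by_cases hiA : i ∈ A
  · -- i ∈ A : the A-part is small
    have hiB : i ∉ Aᶜ := by simp [hiA]
    have hsmallP : ‖pJ cc dd A t s‖ < 1 := by
      rw [pJ, ← Finset.mul_prod_erase _ _ hiA, norm_mul]
      calc ‖(cc i : ℚ_[p]) * t + (dd i : ℚ_[p]) * s‖ * ‖∏ j ∈ A.erase i, ((cc j : ℚ_[p]) * t + (dd j : ℚ_[p]) * s)‖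
          ≤ ‖(cc i : ℚ_[p]) * t + (dd i : ℚ_[p]) * s‖ * 1 := by
            refine mul_le_mul_of_nonneg_left ?_ (norm_nonneg _)
            rw [norm_prod]
            exact Finset.prod_le_one (fun j _ => norm_nonneg _) (fun j _ => hpj j)
        _ < 1 := by rw [mul_one]; exact hi
    have hE : ‖1 - (b : ℚ_[p]) * pJ cc dd Aᶜ t s * y ^ 2‖ < 1 := by
      have h1 : 1 - (b : ℚ_[p]) * pJ cc dd Aᶜ t s * y ^ 2
          = (a : ℚ_[p]) * pJ cc dd A t s * x ^ 2 := by linear_combination -heq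
      rw [h1, norm_mul, norm_mul, hna, one_mul, norm_pow]
      calc ‖pJ cc dd A t s‖ * ‖x‖ ^ 2 ≤ ‖pJ cc dd A t s‖ * 1 := by
            refine mul_le_mul_of_nonneg_left ?_ (norm_nonneg _)
            exact pow_le_one₀ (norm_nonneg _) hx
        _ < 1 := by rw [mul_one]; exact hsmallP
    have hYQ := hJ Aᶜ hiB
    rw [hBc] at hYQ
    have hsqbQ : IsSquare ((b : ℚ_[p]) * pJ cc dd Aᶜ ((dd i : ℚ) : ℚ_[p]) (-((cc i : ℚ) : ℚ_[p]))) :=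
      key_lemma l (b : ℚ_[p]) (pJ cc dd Aᶜ t s) _ y lam hnb (hQn Aᶜ hiB) hlam hy hE hYQ hsq
    have htarget : ((a * Dgen cc dd (a * b) A i : ℚ) : ℚ_[p])
        = ((a : ℚ_[p])) ^ 2 * ((b : ℚ_[p]) * pJ cc dd Aᶜ ((dd i : ℚ) : ℚ_[p]) (-((cc i : ℚ) : ℚ_[p]))) := by
      rw [Dgen, if_pos hiA]
      push_cast [cast_pJ]
      ring
    rw [htarget]
    exact IsSquare.mul ⟨(a : ℚ_[p]), by ring⟩ hsqbQ
  · -- i ∈ Aᶜ : the B-part is small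
    have hiB : i ∈ Aᶜ := by simp [hiA]
    have hsmallP : ‖pJ cc dd Aᶜ t s‖ < 1 := by
      rw [pJ, ← Finset.mul_prod_erase _ _ hiB, norm_mul]
      calc ‖(cc i : ℚ_[p]) * t + (dd i : ℚ_[p]) * s‖ * ‖∏ j ∈ Aᶜ.erase i, ((cc j : ℚ_[p]) * t + (dd j : ℚ_[p]) * s)‖
          ≤ ‖(cc i : ℚ_[p]) * t + (dd i : ℚ_[p]) * s‖ * 1 := by
            refine mul_le_mul_of_nonneg_left ?_ (norm_nonneg _)
            rw [norm_prod]
            exact Finset.prod_le_one (fun j _ => norm_nonneg _) (fun j _ => hpj j)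
        _ < 1 := by rw [mul_one]; exact hi
    have hE : ‖1 - (a : ℚ_[p]) * pJ cc dd A t s * x ^ 2‖ < 1 := by
      have h1 : 1 - (a : ℚ_[p]) * pJ cc dd A t s * x ^ 2
          = (b : ℚ_[p]) * pJ cc dd Aᶜ t s * y ^ 2 := by linear_combination -heq
      rw [h1, norm_mul, norm_mul, hnb, one_mul, norm_pow]
      calc ‖pJ cc dd Aᶜ t s‖ * ‖y‖ ^ 2 ≤ ‖pJ cc dd Aᶜ t s‖ * 1 := by
            refine mul_le_mul_of_nonneg_left ?_ (norm_nonneg _)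
            exact pow_le_one₀ (norm_nonneg _) hy
        _ < 1 := by rw [mul_one]; exact hsmallP
    have hYQ := hJ A hiA
    rw [hAc] at hYQ
    have hsqaQ : IsSquare ((a : ℚ_[p]) * pJ cc dd A ((dd i : ℚ) : ℚ_[p]) (-((cc i : ℚ) : ℚ_[p]))) :=
      key_lemma k (a : ℚ_[p]) (pJ cc dd A t s) _ x lam hna (hQn A hiA) hlam hx hE hYQ hsq
    have htarget : ((a * Dgen cc dd (a * b) A i : ℚ) : ℚ_[p])
        = (a : ℚ_[p]) * pJ cc dd A ((dd i : ℚ) : ℚ_[p]) (-((cc i : ℚ) : ℚ_[p])) := by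
      rw [Dgen, if_neg hiA]
      push_cast [cast_pJ]
      ring
    rw [htarget]
    exact hsqaQ

end helpers

/-- If `(t,s,x,y)` is an integral `ℤ_p`-point of `E` (for a good odd prime `p`), then for
every `i` either `a·D^𝓐_i` is a square in `ℚ_p` or `val_p(p_i(t,s)) = 0`; in particular
`val_p(p_i(t,s))` is even whenever `a·D^𝓐_i` is not a square in `ℚ_p`. -/
theorem stmt_10 (S₀ : Finset ℕ) (hS₀ : ∀ p ∈ S₀, p.Prime)
    {I : Type*} [Fintype I] [DecidableEq I]
    (hIpos : 0 < Fintype.card I) (hIeven : Even (Fintype.card I))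
    (cc dd : I → ℚ) (hcc : ∀ i, cc i ∈ ZS S₀) (hdd : ∀ i, dd i ∈ ZS S₀)
    (hcop : ∀ i, CoprimeZS S₀ (cc i) (dd i))
    (hΔ : ∀ i j : I, i ≠ j → cc j * dd i - cc i * dd j ≠ 0)
    (a b : ℚ) (ha : a ∈ ZS S₀) (hb : b ∈ ZS S₀) (ha0 : a ≠ 0) (hb0 : b ≠ 0)
    (A : Finset I) (hA : Even A.card) (hB : Even Aᶜ.card)
    (p : ℕ) (hp : p.Prime) (hpodd : p ≠ 2) (hpS : p ∉ S₀)
    (hvd : padicValRat p (a * b) = 0)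
    (hvΔ : ∀ i j : I, i ≠ j → padicValRat p (cc j * dd i - cc i * dd j) = 0)
    (t s x y : Qp p hp) (ht : ‖t‖ ≤ 1) (hs : ‖s‖ ≤ 1) (hx : ‖x‖ ≤ 1) (hy : ‖y‖ ≤ 1)
    (hprim : ‖t‖ = 1 ∨ ‖s‖ = 1)
    (heq : EqnE cc dd A a b t s x y) :
    (∀ i : I, IsSquare ((a * Dgen cc dd (a * b) A i : ℚ) : Qp p hp) ∨
        ‖(cc i : Qp p hp) * t + (dd i : Qp p hp) * s‖ = 1) ∧
      (∀ i : I, ¬ IsSquare ((a * Dgen cc dd (a * b) A i : ℚ) : Qp p hp) →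
        Even (QpVal p hp ((cc i : Qp p hp) * t + (dd i : Qp p hp) * s))) := by
  classical
  letI : Fact p.Prime := ⟨hp⟩
  have hple : ∀ q : ℚ, q ∈ ZS S₀ → ‖(q : ℚ_[p])‖ ≤ 1 := fun q hq =>
    norm_ratCast_le_one q (fun _ => hq p hp hpS)
  have hvab : padicValRat p a = 0 ∧ padicValRat p b = 0 := by
    have hm := padicValRat.mul (p := p) ha0 hb0
    rw [hvd] at hm
    have h1 : 0 ≤ padicValRat p a := ha p hp hpS
    have h2 : 0 ≤ padicValRat p b := hb p hp hpS
    omega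
  have hna : ‖(a : ℚ_[p])‖ = 1 := norm_ratCast_eq_one a ha0 hvab.1
  have hnb : ‖(b : ℚ_[p])‖ = 1 := norm_ratCast_eq_one b hb0 hvab.2
  have hc1 : ∀ i, ‖((cc i : ℚ) : ℚ_[p])‖ ≤ 1 := fun i => hple _ (hcc i)
  have hd1 : ∀ i, ‖((dd i : ℚ) : ℚ_[p])‖ ≤ 1 := fun i => hple _ (hdd i)
  have hcd : ∀ i, ‖((cc i : ℚ) : ℚ_[p])‖ = 1 ∨ ‖((dd i : ℚ) : ℚ_[p])‖ = 1 := by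
    intro i
    by_contra hcon
    push_neg at hcon
    obtain ⟨hcne, hdne⟩ := hcon
    have hclt := lt_of_le_of_ne (hc1 i) hcne
    have hdlt := lt_of_le_of_ne (hd1 i) hdne
    obtain ⟨u, v, hu, hv, huv⟩ := hcop i
    have h2 : ((u * cc i + v * dd i : ℚ) : ℚ_[p])
        = (u : ℚ_[p]) * ((cc i : ℚ) : ℚ_[p]) + (v : ℚ_[p]) * ((dd i : ℚ) : ℚ_[p]) := by
      push_cast; ring
    have h3 : ‖(u : ℚ_[p]) * ((cc i : ℚ) : ℚ_[p]) + (v : ℚ_[p]) * ((dd i : ℚ) : ℚ_[p])‖ < 1 := by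
      refine lt_of_le_of_lt (Padic.nonarchimedean _ _) (max_lt ?_ ?_)
      · rw [norm_mul]
        calc ‖(u : ℚ_[p])‖ * ‖((cc i : ℚ) : ℚ_[p])‖ ≤ 1 * ‖((cc i : ℚ) : ℚ_[p])‖ :=
              mul_le_mul_of_nonneg_right (hple u hu) (norm_nonneg _)
          _ < 1 := by rw [one_mul]; exact hclt
      · rw [norm_mul]
        calc ‖(v : ℚ_[p])‖ * ‖((dd i : ℚ) : ℚ_[p])‖ ≤ 1 * ‖((dd i : ℚ) : ℚ_[p])‖ :=
              mul_le_mul_of_nonneg_right (hple v hv) (norm_nonneg _)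
          _ < 1 := by rw [one_mul]; exact hdlt
    rw [← h2, huv] at h3
    simp at h3
  have hΔn : ∀ i j, i ≠ j → ‖((cc j * dd i - cc i * dd j : ℚ) : ℚ_[p])‖ = 1 :=
    fun i j hij => norm_ratCast_eq_one _ (hΔ i j hij) (hvΔ i j hij)
  obtain ⟨k, hk⟩ := hA
  obtain ⟨l, hl⟩ := hB
  have hAc : A.card = 2 * k := by omega
  have hBc : Aᶜ.card = 2 * l := by omega
  have hsq : ∀ u w : ℚ_[p], ‖w‖ = 1 → ‖u - w ^ 2‖ < 1 → IsSquare u :=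
    fun u w hw h => near_sq_isSquare hpodd hw h
  let t' : ℚ_[p] := t
  let s' : ℚ_[p] := s
  let x' : ℚ_[p] := x
  let y' : ℚ_[p] := y
  have ht' : ‖t'‖ ≤ 1 := ht
  have hs' : ‖s'‖ ≤ 1 := hs
  have hx' : ‖x'‖ ≤ 1 := hx
  have hy' : ‖y'‖ ≤ 1 := hy
  have hprim' : ‖t'‖ = 1 ∨ ‖s'‖ = 1 := hprim
  have heq' : (a : ℚ_[p]) * pJ cc dd A t' s' * x' ^ 2
      + (b : ℚ_[p]) * pJ cc dd Aᶜ t' s' * y' ^ 2 = 1 := heq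
  have H1 : ∀ i : I, IsSquare ((a * Dgen cc dd (a * b) A i : ℚ) : ℚ_[p]) ∨
      ‖(cc i : ℚ_[p]) * t' + (dd i : ℚ_[p]) * s'‖ = 1 := by
    intro i
    by_cases hni : ‖(cc i : ℚ_[p]) * t' + (dd i : ℚ_[p]) * s'‖ = 1
    · exact Or.inr hni
    · refine Or.inl ?_
      have hle : ‖(cc i : ℚ_[p]) * t' + (dd i : ℚ_[p]) * s'‖ ≤ 1 := by
        refine le_trans (Padic.nonarchimedean _ _) (max_le ?_ ?_)
        · rw [norm_mul]; exact mul_le_one₀ (hc1 i) (norm_nonneg _) ht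
        · rw [norm_mul]; exact mul_le_one₀ (hd1 i) (norm_nonneg _) hs
      exact main_aux hpodd cc dd A k l hAc hBc a b hna hnb hc1 hd1 hcd hΔn
        t' s' x' y' ht' hs' hx' hy' hprim' heq' hsq i
        (lt_of_le_of_ne hle hni)
  refine ⟨fun i => H1 i, fun i hns => ?_⟩
  rcases H1 i with hsq' | hn1
  · exact absurd hsq' hns
  · set w : ℚ_[p] := (cc i : ℚ_[p]) * t' + (dd i : ℚ_[p]) * s' with hw
    have hz0 : w ≠ 0 := by
      intro h0
      rw [h0] at hn1
      simp at hn1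
    have hval : w.valuation = 0 := by
      have h2 := Padic.norm_eq_zpow_neg_valuation hz0
      rw [hn1] at h2
      have h3 : (p : ℝ) ^ (-w.valuation) = (p : ℝ) ^ (0 : ℤ) := by
        rw [← h2]; norm_num
      have h4 := zpow_right_injective₀ (by exact_mod_cast hp.pos : (0 : ℝ) < p)
        (by exact_mod_cast hp.ne_one : (p : ℝ) ≠ 1) h3
      omega
    have hfin : QpVal p hp ((cc i : Qp p hp) * t + (dd i : Qp p hp) * s) = 0 := hval
    rw [hfin]
    exact Even.zero
end
end

section
/- Let k be a number field, S_0 a finite set of finite places of k, and d ∈ 𝓞_{S_0} nonzero, not a square in k, with v(d) ≤ 1 for every finite place v ∉ S_0 and v(d) = 1 for every finite place v ∉ S_0 dividing 2. Let K = k(ω) with ω² = d, and let T_0 be the finite places of K lying above places of S_0. Let a ∈ 𝓞_{S_0} divide d in 𝓞_{S_0}. Then in the ring 𝓞_{T_0}, the square of the ideal generated by a and ω is the principal ideal generated by a: (a, ω)² = (a). -/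
noncomputable section

open IsDedekindDomain NumberField IsDedekindDomain.HeightOneSpectrum
open scoped Multiplicative nonZeroDivisors

local notation "ℤₘ₀" => WithZero (Multiplicative ℤ)

section Aux

variable {R : Type*} [CommRing R] [IsDedekindDomain R] {K : Type*} [Field K] [Algebra R K]
  [IsFractionRing R K]

theorem aux_exists_rep (v : HeightOneSpectrum R) (x : K) (hx : v.valuation K x ≤ 1) :
    ∃ β γ : R, γ ∉ v.asIdeal ∧ algebraMap R K γ * x = algebraMap R K β := by
  obtain ⟨r, s, hs, hrs⟩ := IsFractionRing.div_surjective (A := R) x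
  by_cases hx0 : x = 0
  · exact ⟨0, 1, fun h => v.isPrime.ne_top (Ideal.eq_top_of_isUnit_mem _ h isUnit_one),
      by simp [hx0]⟩
  have hs0 : s ≠ 0 := nonZeroDivisors.ne_zero hs
  have hr0 : r ≠ 0 := by
    rintro rfl; simp at hrs; exact hx0 hrs.symm
  obtain ⟨g, hg⟩ := WithZero.ne_zero_iff_exists.mp (v.intValuation_ne_zero s hs0)
  have hgle : (g : ℤₘ₀) ≤ 1 := by rw [hg]; exact v.intValuation_le_one s
  have hgle' : Multiplicative.toAdd g ≤ 0 := by
    have := WithZero.coe_le_coe.mp (by exact_mod_cast hgle)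
    exact Multiplicative.toAdd_le.mpr this
  set n : ℕ := (-Multiplicative.toAdd g).toNat with hn
  have hvs : v.intValuation s = Multiplicative.ofAdd (-(n : ℤ)) := by
    rw [← hg]; congr 1
    rw [hn, Int.toNat_of_nonneg (by omega)]
    simp
  have hdvd : v.asIdeal ^ n ∣ Ideal.span {s} :=
    (intValuation_le_pow_iff_dvd v s n).mp (le_of_eq hvs)
  have hnotdvd : ¬ v.asIdeal ^ (n + 1) ∣ Ideal.span {s} := by
    intro h
    have h2 := (intValuation_le_pow_iff_dvd v s (n + 1)).mpr h
    rw [hvs] at h2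
    have h3 := (WithZero.coe_le_coe).mp h2
    have h4 := Multiplicative.toAdd_le.mpr h3
    simp only [toAdd_ofAdd, Nat.cast_add, Nat.cast_one] at h4; omega
  obtain ⟨J, hJ⟩ := hdvd
  have hJv : ¬ J ≤ v.asIdeal := by
    intro h
    refine hnotdvd ?_
    rw [hJ, pow_succ]
    exact mul_dvd_mul_left _ (Ideal.dvd_iff_le.mpr h)
  obtain ⟨γ, hγJ, hγv⟩ := SetLike.not_le_iff_exists.mp hJv
  have hrval : v.intValuation r ≤ v.intValuation s := by
    have hxval : v.valuation K x = v.intValuation r / v.intValuation s := by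
      rw [← hrs, map_div₀, valuation_of_algebraMap, valuation_of_algebraMap]
    have hs0' : v.intValuation s ≠ 0 := v.intValuation_ne_zero s hs0
    rw [hxval, div_le_one₀ (lt_of_le_of_ne (zero_le') (Ne.symm hs0'))] at hx
    simpa using hx
  have hrdvd : v.asIdeal ^ n ∣ Ideal.span {r} :=
    (intValuation_le_pow_iff_dvd v r n).mp (hrval.trans (le_of_eq hvs))
  have hmem : γ * r ∈ Ideal.span {s} := by
    have h1 : Ideal.span {γ * r} ≤ Ideal.span {s} := by
      rw [← Ideal.span_singleton_mul_span_singleton, hJ, mul_comm (v.asIdeal ^ n) J]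
      exact Ideal.mul_mono ((Ideal.span_singleton_le_iff_mem J).mpr hγJ)
        (Ideal.le_of_dvd hrdvd)
    exact h1 (Ideal.mem_span_singleton_self _)
  obtain ⟨β, hβ⟩ := Ideal.mem_span_singleton'.mp hmem
  refine ⟨β, γ, hγv, ?_⟩
  have hsK : algebraMap R K s ≠ 0 := by
    simpa using (IsFractionRing.injective R K).ne_iff.mpr hs0
  rw [← hrs]
  field_simp
  rw [← map_mul, ← map_mul]
  exact congrArg (algebraMap R K) (hβ.symm.trans (mul_comm β s))

theorem aux_intVal_eq_one (v : HeightOneSpectrum R) {γ : R} (h : γ ∉ v.asIdeal) :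
    v.intValuation γ = 1 := by
  refine le_antisymm (v.intValuation_le_one γ) ?_
  by_contra hlt
  push_neg at hlt
  exact h (Ideal.dvd_span_singleton.mp ((v.intValuation_lt_one_iff_dvd γ).mp hlt))

theorem aux_zm_le_one_of_sq {x : ℤₘ₀} (h : x * x ≤ 1) : x ≤ 1 := by
  rcases eq_or_ne x 0 with rfl | hx0
  · exact zero_le'
  obtain ⟨g, rfl⟩ := WithZero.ne_zero_iff_exists.mp hx0
  rw [← WithZero.coe_mul, ← WithZero.coe_one, WithZero.coe_le_coe] at h
  rw [← WithZero.coe_one, WithZero.coe_le_coe]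
  have h2 := Multiplicative.toAdd_le.mpr h
  rw [toAdd_mul, toAdd_one] at h2
  refine Multiplicative.toAdd_le.mp ?_
  rw [toAdd_one]; omega

theorem aux_zm_le_neg_one {x : ℤₘ₀} (h0 : x ≠ 0) (h : x < 1) :
    x ≤ ((Multiplicative.ofAdd (-1 : ℤ) : Multiplicative ℤ) : ℤₘ₀) := by
  obtain ⟨g, rfl⟩ := WithZero.ne_zero_iff_exists.mp h0
  rw [← WithZero.coe_one, WithZero.coe_lt_coe] at h
  rw [WithZero.coe_le_coe]
  have h2 := Multiplicative.toAdd_lt.mpr h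
  rw [toAdd_one] at h2
  refine Multiplicative.toAdd_le.mp ?_
  rw [toAdd_ofAdd]; omega

theorem aux_zm_eq_one {x : ℤₘ₀} (h0 : x ≠ 0) (h1 : x ≤ 1) (h2 : x⁻¹ ≤ 1) : x = 1 := by
  obtain ⟨g, rfl⟩ := WithZero.ne_zero_iff_exists.mp h0
  rw [← WithZero.coe_inv] at h2
  rw [← WithZero.coe_one, WithZero.coe_le_coe] at h1 h2
  rw [← WithZero.coe_one, WithZero.coe_inj]
  have k1 := Multiplicative.toAdd_le.mpr h1
  have k2 := Multiplicative.toAdd_le.mpr h2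
  rw [toAdd_one] at k1 k2
  rw [toAdd_inv] at k2
  have : Multiplicative.toAdd g = 0 := by omega
  rw [← ofAdd_toAdd g, this]; rfl

end Aux

section NF

variable (K : Type*) [Field K] [NumberField K]

theorem aux_exists_gen (w : HeightOneSpectrum (𝓞 K)) :
    ∃ (n : ℕ) (t : 𝓞 K), 0 < n ∧ t ≠ 0 ∧ Ideal.span {t} = w.asIdeal ^ n := by
  have hne : w.asIdeal ≠ 0 := w.ne_bot
  have I0 : w.asIdeal ∈ (Ideal (𝓞 K))⁰ := mem_nonZeroDivisors_of_ne_zero hne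
  set n := Fintype.card (ClassGroup (𝓞 K)) with hn
  have hpos : 0 < n := Fintype.card_pos
  have hc : ClassGroup.mk0 (⟨w.asIdeal, I0⟩ : (Ideal (𝓞 K))⁰) ^ n = 1 := pow_card_eq_one
  rw [← map_pow] at hc
  have hmem : w.asIdeal ^ n ∈ (Ideal (𝓞 K))⁰ := pow_mem I0 n
  have hps : ((⟨w.asIdeal, I0⟩ : (Ideal (𝓞 K))⁰) ^ n) = (⟨w.asIdeal ^ n, hmem⟩ : (Ideal (𝓞 K))⁰) := by
    ext; simp
  rw [hps] at hc
  have hprin : (w.asIdeal ^ n).IsPrincipal := (ClassGroup.mk0_eq_one_iff hmem).mp hc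
  obtain ⟨t, ht⟩ := hprin.principal
  refine ⟨n, t, hpos, ?_, ?_⟩
  · rintro rfl
    obtain ⟨x, hxw, hx0⟩ := Submodule.exists_mem_ne_zero_of_ne_bot w.ne_bot
    have : x ^ n ∈ w.asIdeal ^ n := Ideal.pow_mem_pow hxw n
    rw [ht] at this
    rw [Submodule.span_zero_singleton, Submodule.mem_bot] at this
    exact hx0 (pow_eq_zero_iff hpos.ne' |>.mp this)
  · exact ht.symm

end NF

set_option maxHeartbeats 1000000 in
set_option synthInstance.maxHeartbeats 400000 in
/-- In `𝓞_{T₀}`, the square of the ideal generated by `a` and `ω = √d` is the principal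
ideal generated by `a`, for any divisor `a` of `d` in `𝓞_{S₀}`: `(a, ω)² = (a)`. -/
theorem stmt_12 (k : Type*) [Field k] [NumberField k]
    (S₀ : Set (HeightOneSpectrum (𝓞 k))) (hS₀fin : S₀.Finite)
    (d : k) (hd : d ∈ S₀.integer k) (hd0 : d ≠ 0) (hdsq : ¬ IsSquare d)
    (hval : ∀ v : HeightOneSpectrum (𝓞 k), v ∉ S₀ →
      ((Multiplicative.ofAdd (-1 : ℤ) : Multiplicative ℤ) : WithZero (Multiplicative ℤ)) ≤ v.valuation k d)
    (hval2 : ∀ v : HeightOneSpectrum (𝓞 k), v ∉ S₀ → (2 : 𝓞 k) ∈ v.asIdeal →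
      v.valuation k d = ((Multiplicative.ofAdd (-1 : ℤ) : Multiplicative ℤ) : WithZero (Multiplicative ℤ)))
    (K : Type*) [Field K] [NumberField K] [Algebra k K]
    (ω : K) (hω : ω ^ 2 = algebraMap k K d) (hgen : Algebra.adjoin k {ω} = ⊤)
    (T₀ : Set (HeightOneSpectrum (𝓞 K)))
    (hT₀ : T₀ = {w | ∃ v ∈ S₀,
      Ideal.comap (algebraMap (𝓞 k) (𝓞 K)) w.asIdeal = v.asIdeal})
    (a e : k) (ha : a ∈ S₀.integer k) (he : e ∈ S₀.integer k) (hae : a * e = d) :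
    (Ideal.span {x : T₀.integer K |
        (x : K) = algebraMap k K a ∨ (x : K) = ω}) ^ 2 =
      Ideal.span {x : T₀.integer K | (x : K) = algebraMap k K a} := by
  classical
  have ha0 : a ≠ 0 := fun h => hd0 (by rw [← hae, h, zero_mul])
  have he0 : e ≠ 0 := fun h => hd0 (by rw [← hae, h, mul_zero])
  have key_int : ∀ x : 𝓞 K, IsIntegral (𝓞 k) x := fun x =>
    IsIntegral.tower_top (IsIntegralClosure.isIntegral ℤ K x)
  let below : HeightOneSpectrum (𝓞 K) → HeightOneSpectrum (𝓞 k) := fun w =>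
    { asIdeal := Ideal.comap (algebraMap (𝓞 k) (𝓞 K)) w.asIdeal
      isPrime := Ideal.IsPrime.comap _
      ne_bot := by
        obtain ⟨x, hxw, hx0⟩ := Submodule.exists_mem_ne_zero_of_ne_bot w.ne_bot
        exact Ideal.comap_ne_bot_of_integral_mem hx0 hxw (key_int x) }
  have hbelow_val : ∀ (w : HeightOneSpectrum (𝓞 K)) (x : k),
      (below w).valuation k x ≤ 1 → w.valuation K (algebraMap k K x) ≤ 1 := by
    intro w x hx
    obtain ⟨β, γ, hγ, hrep⟩ := aux_exists_rep (below w) x hx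
    have hγK : algebraMap k K (algebraMap (𝓞 k) k γ)
        = algebraMap (𝓞 K) K (algebraMap (𝓞 k) (𝓞 K) γ) := by
      rw [← IsScalarTower.algebraMap_apply, ← IsScalarTower.algebraMap_apply]
    have hβK : algebraMap k K (algebraMap (𝓞 k) k β)
        = algebraMap (𝓞 K) K (algebraMap (𝓞 k) (𝓞 K) β) := by
      rw [← IsScalarTower.algebraMap_apply, ← IsScalarTower.algebraMap_apply]
    have hrepK := congrArg (algebraMap k K) hrep
    rw [map_mul, hγK, hβK] at hrepK
    have hγ1 : w.intValuation (algebraMap (𝓞 k) (𝓞 K) γ) = 1 :=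
      aux_intVal_eq_one w (fun hmem => hγ (Ideal.mem_comap.mpr hmem))
    have h2 := congrArg (w.valuation (K := K)) hrepK
    rw [map_mul, valuation_of_algebraMap, valuation_of_algebraMap, hγ1, one_mul] at h2
    rw [h2]
    exact w.intValuation_le_one _
  have hbelow_eq : ∀ (w : HeightOneSpectrum (𝓞 K)) (x : k), x ≠ 0 →
      (below w).valuation k x = 1 → w.valuation K (algebraMap k K x) = 1 := by
    intro w x hx0 hx
    have h1 : w.valuation K (algebraMap k K x) ≤ 1 := hbelow_val w x (le_of_eq hx)
    have hinv : (below w).valuation k x⁻¹ ≤ 1 := by rw [map_inv₀, hx]; simp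
    have h2 : w.valuation K (algebraMap k K x⁻¹) ≤ 1 := hbelow_val w _ hinv
    rw [map_inv₀ (algebraMap k K), map_inv₀] at h2
    have h0 : w.valuation K (algebraMap k K x) ≠ 0 := by
      rw [Valuation.ne_zero_iff]
      exact fun h => hx0 ((map_eq_zero _).mp h)
    exact aux_zm_eq_one h0 h1 h2
  have hnotT : ∀ w ∉ T₀, below w ∉ S₀ := by
    intro w hw hvS
    exact hw (by rw [hT₀]; exact ⟨below w, hvS, rfl⟩)
  have hmem_of : ∀ x : k, x ∈ S₀.integer k → algebraMap k K x ∈ T₀.integer K := by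
    intro x hx
    have : ∀ w ∉ T₀, w.valuation K (algebraMap k K x) ≤ 1 := fun w hw =>
      hbelow_val w x (Set.integer_valuation_le_one S₀ k ⟨x, hx⟩ (hnotT w hw))
    exact this
  have hωint : ω ∈ T₀.integer K := by
    have : ∀ w ∉ T₀, w.valuation K ω ≤ 1 := by
      intro w hw
      refine aux_zm_le_one_of_sq ?_
      rw [← map_mul]
      have : ω * ω = algebraMap k K d := by rw [← hω]; ring
      rw [this]
      exact hbelow_val w d (Set.integer_valuation_le_one S₀ k ⟨d, hd⟩ (hnotT w hw))
    exact this
  set A : T₀.integer K := ⟨algebraMap k K a, hmem_of a ha⟩ with hA_def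
  set E : T₀.integer K := ⟨algebraMap k K e, hmem_of e he⟩ with hE_def
  set Ω : T₀.integer K := ⟨ω, hωint⟩ with hΩ_def
  have hΩΩ : Ω * Ω = A * E := by
    apply Subtype.ext
    show ω * ω = algebraMap k K a * algebraMap k K e
    rw [← map_mul, hae, ← hω]; ring
  -- Bezout: span {A, E} = ⊤
  have hbez : Ideal.span ({A, E} : Set (T₀.integer K)) = ⊤ := by
    by_contra hne
    obtain ⟨m, hm, hle⟩ := Ideal.exists_le_maximal _ hne
    have hAm : A ∈ m := hle (Ideal.subset_span (by simp))
    have hEm : E ∈ m := hle (Ideal.subset_span (by simp))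
    have hprime : m.IsPrime := hm.isPrime
    have hAK : (A : K) ≠ 0 := by
      show algebraMap k K a ≠ 0
      exact fun h => ha0 ((map_eq_zero _).mp h)
    obtain ⟨r, s, hs, hrs⟩ := IsFractionRing.div_surjective (A := 𝓞 K) ((A : T₀.integer K) : K)
    have hsK0 : algebraMap (𝓞 K) K s ≠ 0 := by
      simpa using (IsFractionRing.injective (𝓞 K) K).ne_iff.mpr (nonZeroDivisors.ne_zero hs)
    have hsA : algebraMap (𝓞 K) (T₀.integer K) s * A = algebraMap (𝓞 K) (T₀.integer K) r := by
      apply Subtype.ext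
      show algebraMap (𝓞 K) K s * (A : K) = algebraMap (𝓞 K) K r
      rw [← hrs]
      field_simp
    have hrm : algebraMap (𝓞 K) (T₀.integer K) r ∈ m := by
      rw [← hsA]; exact Ideal.mul_mem_left m _ hAm
    have hr0 : r ≠ 0 := by
      intro h
      apply hAK
      have : algebraMap (𝓞 K) K r = 0 := by rw [h, map_zero]
      rw [← hrs, this, zero_div]
    have pprime : (Ideal.comap (algebraMap (𝓞 K) (T₀.integer K)) m).IsPrime :=
      Ideal.IsPrime.comap _
    have hpbot : Ideal.comap (algebraMap (𝓞 K) (T₀.integer K)) m ≠ ⊥ := by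
      intro h
      have : r ∈ Ideal.comap (algebraMap (𝓞 K) (T₀.integer K)) m := Ideal.mem_comap.mpr hrm
      rw [h] at this
      exact hr0 (Submodule.mem_bot _ |>.mp this)
    set w : HeightOneSpectrum (𝓞 K) :=
      ⟨Ideal.comap (algebraMap (𝓞 K) (T₀.integer K)) m, pprime, hpbot⟩ with hw_def
    by_cases hwT : w ∈ T₀
    · obtain ⟨n, t, hn, ht0, ht⟩ := aux_exists_gen K w
      have htp : t ∈ w.asIdeal := by
        have h1 : t ∈ Ideal.span {t} := Ideal.mem_span_singleton_self t
        rw [ht] at h1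
        exact Ideal.pow_le_self hn.ne' h1
      have htm : algebraMap (𝓞 K) (T₀.integer K) t ∈ m := Ideal.mem_comap.mp htp
      have htK0 : algebraMap (𝓞 K) K t ≠ 0 := by
        simpa using (IsFractionRing.injective (𝓞 K) K).ne_iff.mpr ht0
      have hinvmem : (algebraMap (𝓞 K) K t)⁻¹ ∈ T₀.integer K := by
        have : ∀ u ∉ T₀, u.valuation K (algebraMap (𝓞 K) K t)⁻¹ ≤ 1 := by
          intro u hu
          have huw : u ≠ w := fun h => hu (h ▸ hwT)
          have hut : u.intValuation t = 1 := by
            refine aux_intVal_eq_one u (fun hmem => huw ?_)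
            have hdvd : u.asIdeal ∣ Ideal.span {t} := Ideal.dvd_span_singleton.mpr hmem
            rw [ht] at hdvd
            have hle' : w.asIdeal ≤ u.asIdeal :=
              (Ideal.IsPrime.pow_le_iff hn.ne').mp (Ideal.le_of_dvd hdvd)
            exact HeightOneSpectrum.ext ((w.isMaximal.eq_of_le u.isPrime.ne_top hle').symm)
          rw [map_inv₀, valuation_of_algebraMap, hut, inv_one]
        exact this
      have hunit : IsUnit (algebraMap (𝓞 K) (T₀.integer K) t) := by
        refine isUnit_iff_exists_inv.mpr ⟨⟨(algebraMap (𝓞 K) K t)⁻¹, hinvmem⟩, ?_⟩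
        apply Subtype.ext
        show algebraMap (𝓞 K) K t * (algebraMap (𝓞 K) K t)⁻¹ = 1
        field_simp
      exact hm.ne_top (m.eq_top_of_isUnit_mem htm hunit)
    · have hclaim : ∀ x : T₀.integer K, x ∈ m → w.valuation K (x : K) < 1 := by
        intro x hx
        have hx1 : w.valuation K (x : K) ≤ 1 := Set.integer_valuation_le_one T₀ K x hwT
        obtain ⟨β, γ, hγ, hrep⟩ := aux_exists_rep w (x : K) hx1
        have hγx : algebraMap (𝓞 K) (T₀.integer K) γ * x
            = algebraMap (𝓞 K) (T₀.integer K) β := by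
          apply Subtype.ext
          exact hrep
        have hβm : algebraMap (𝓞 K) (T₀.integer K) β ∈ m := by
          rw [← hγx]; exact Ideal.mul_mem_left m _ hx
        have hβp : β ∈ w.asIdeal := Ideal.mem_comap.mpr hβm
        have hβlt : w.intValuation β < 1 :=
          (w.intValuation_lt_one_iff_dvd β).mpr (Ideal.dvd_span_singleton.mpr hβp)
        have hγ1 : w.intValuation γ = 1 := aux_intVal_eq_one w hγ
        have h2 := congrArg (w.valuation (K := K)) hrep
        rw [map_mul, valuation_of_algebraMap, valuation_of_algebraMap, hγ1, one_mul] at h2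
        rw [h2]
        exact hβlt
      have hwa : w.valuation K ((A : T₀.integer K) : K) < 1 := hclaim A hAm
      have hwe : w.valuation K ((E : T₀.integer K) : K) < 1 := hclaim E hEm
      have hv' : below w ∉ S₀ := hnotT w hwT
      have hva_ne : (below w).valuation k a ≠ 0 := (Valuation.ne_zero_iff _).mpr ha0
      have hve_ne : (below w).valuation k e ≠ 0 := (Valuation.ne_zero_iff _).mpr he0
      have hva1 : (below w).valuation k a ≤ 1 := Set.integer_valuation_le_one S₀ k ⟨a, ha⟩ hv'
      have hve1 : (below w).valuation k e ≤ 1 := Set.integer_valuation_le_one S₀ k ⟨e, he⟩ hv'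
      have hva_lt : (below w).valuation k a < 1 := by
        rcases lt_or_eq_of_le hva1 with h | h
        · exact h
        · exact absurd (hbelow_eq w a ha0 h) (ne_of_lt hwa)
      have hve_lt : (below w).valuation k e < 1 := by
        rcases lt_or_eq_of_le hve1 with h | h
        · exact h
        · exact absurd (hbelow_eq w e he0 h) (ne_of_lt hwe)
      have hprod : (below w).valuation k d
          = (below w).valuation k a * (below w).valuation k e := by
        rw [← map_mul, hae]
      have hd1 := hval (below w) hv'
      have hle2 : (below w).valuation k d ≤
          ((Multiplicative.ofAdd (-1 : ℤ) : Multiplicative ℤ) : ℤₘ₀)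
            * ((Multiplicative.ofAdd (-1 : ℤ) : Multiplicative ℤ) : ℤₘ₀) := by
        rw [hprod]
        exact mul_le_mul' (aux_zm_le_neg_one hva_ne hva_lt) (aux_zm_le_neg_one hve_ne hve_lt)
      have hfin := le_trans hd1 hle2
      rw [← WithZero.coe_mul, WithZero.coe_le_coe] at hfin
      have := Multiplicative.toAdd_le.mpr hfin
      rw [toAdd_mul, toAdd_ofAdd] at this
      omega
  -- assemble
  have hset1 : {x : T₀.integer K | (x : K) = algebraMap k K a ∨ (x : K) = ω}
      = ({A, Ω} : Set (T₀.integer K)) := by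
    ext x
    simp only [Set.mem_setOf_eq, Set.mem_insert_iff, Set.mem_singleton_iff]
    constructor
    · rintro (h | h)
      · exact Or.inl (Subtype.ext h)
      · exact Or.inr (Subtype.ext h)
    · rintro (rfl | rfl)
      · exact Or.inl rfl
      · exact Or.inr rfl
  have hset2 : {x : T₀.integer K | (x : K) = algebraMap k K a} = ({A} : Set (T₀.integer K)) := by
    ext x
    simp only [Set.mem_setOf_eq, Set.mem_singleton_iff]
    constructor
    · exact fun h => Subtype.ext h
    · rintro rfl; rfl
  rw [hset1, hset2, pow_two]
  apply le_antisymm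
  · rw [Ideal.span_mul_span', Ideal.span_le]
    rintro z hz
    rw [Set.mem_mul] at hz
    obtain ⟨x, hx, y, hy, rfl⟩ := hz
    rw [SetLike.mem_coe, Ideal.mem_span_singleton]
    rcases hx with rfl | hx
    · exact Dvd.intro _ rfl
    · rw [Set.mem_singleton_iff] at hx
      subst hx
      rcases hy with rfl | hy
      · exact Dvd.intro_left _ rfl
      · rw [Set.mem_singleton_iff] at hy
        subst hy
        exact ⟨E, hΩΩ⟩
  · rw [Ideal.span_le, Set.singleton_subset_iff, SetLike.mem_coe]
    have h1 : (1 : T₀.integer K) ∈ Ideal.span ({A, E} : Set (T₀.integer K)) := by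
      rw [hbez]; trivial
    obtain ⟨x, y, hxy⟩ := Ideal.mem_span_pair.mp h1
    have hid : A = x * (A * A) + y * (Ω * Ω) := by
      rw [hΩΩ]
      linear_combination A * hxy.symm
    have hAmem : A ∈ Ideal.span ({A, Ω} : Set (T₀.integer K)) := Ideal.subset_span (by simp)
    have hΩmem : Ω ∈ Ideal.span ({A, Ω} : Set (T₀.integer K)) := Ideal.subset_span (by simp)
    have hfin : x * (A * A) + y * (Ω * Ω) ∈
        Ideal.span ({A, Ω} : Set (T₀.integer K)) * Ideal.span ({A, Ω} : Set (T₀.integer K)) :=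
      Ideal.add_mem _
        (Ideal.mul_mem_left _ x (Ideal.mul_mem_mul hAmem hAmem))
        (Ideal.mul_mem_left _ y (Ideal.mul_mem_mul hΩmem hΩmem))
    rwa [← hid] at hfin
end
end

section
/- Assume |𝓘| ≤ 4. Let p > 5 be a prime not in S_0 with val_p(a) = 1 and val_p(b) = 0 (so val_p(d) = 1). If there exists an integral ℤ_p-point of E, i.e. (t,s,x,y) ∈ ℤ_p⁴ with t, s not both in p·ℤ_p and a·p_𝓐(t,s)·x² + b·p_𝓑(t,s)·y² = 1, then there exists such a tuple (t',s',x',y') which in addition satisfies val_p(p_𝓘(t',s')) = 0, equivalently val_p(d·p_𝓘(t',s')) = 1. -/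
noncomputable section

open Finset

section KeyF
variable {p : ℕ} [Fact p.Prime]

lemma sq_fiber_card_le {K : Type*} [Field K] [Fintype K] [DecidableEq K] (c : K) :
    (Finset.univ.filter fun u : K => u ^ 2 = c).card ≤ 2 := by
  by_cases hex : ∃ r : K, r ^ 2 = c
  · obtain ⟨r, hr⟩ := hex
    have hsub : (Finset.univ.filter fun u : K => u ^ 2 = c) ⊆ {r, -r} := by
      intro u hu
      simp only [Finset.mem_filter, Finset.mem_univ, true_and] at hu
      have h0 : (u - r) * (u + r) = 0 := by linear_combination hu - hr
      rcases mul_eq_zero.1 h0 with h | h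
      · simp [Finset.mem_insert, sub_eq_zero.1 h]
      · simp [Finset.mem_insert, Finset.mem_singleton, eq_neg_of_add_eq_zero_left h]
    exact (Finset.card_le_card hsub).trans (by simpa using Finset.card_insert_le r ({-r} : Finset K))
  · push_neg at hex
    have : (Finset.univ.filter fun u : K => u ^ 2 = c) = ∅ :=
      Finset.filter_eq_empty_iff.mpr fun u _ => hex u
    simp [this]

lemma exists_avoid (hp5 : 5 < p) {I : Type*} [Fintype I] [DecidableEq I]
    (hIle : Fintype.card I ≤ 4) (C D : I → ZMod p) (h : ∀ i, C i ≠ 0 ∨ D i ≠ 0) :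
    ∃ τ : ZMod p, ∀ i, C i * τ + D i ≠ 0 := by
  haveI : NeZero p := ⟨(Fact.out : p.Prime).ne_zero⟩
  set bad : Finset (ZMod p) := Finset.univ.image fun i => -(D i) / (C i) with hbad
  have hcard : bad.card < Fintype.card (ZMod p) := by
    have h1 : bad.card ≤ Fintype.card I := Finset.card_image_le.trans (by simp)
    have h2 : Fintype.card (ZMod p) = p := ZMod.card p
    omega
  have : ∃ τ : ZMod p, τ ∉ bad := by
    by_contra hc
    push_neg at hc
    have : bad = Finset.univ := Finset.eq_univ_iff_forall.mpr hc
    rw [this, Finset.card_univ] at hcard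
    exact lt_irrefl _ hcard
  obtain ⟨τ, hτ⟩ := this
  refine ⟨τ, fun i => ?_⟩
  by_cases hc : C i = 0
  · simpa [hc] using (h i).resolve_left (not_not_intro hc)
  · intro heq
    apply hτ
    have : τ = -(D i) / (C i) := (eq_div_iff hc).mpr (by linear_combination heq)
    exact Finset.mem_image.mpr ⟨i, Finset.mem_univ i, this.symm⟩

lemma keyF (hp5 : 5 < p) {I : Type*} [Fintype I] [DecidableEq I]
    (hIle : Fintype.card I ≤ 4) (C D : I → ZMod p) (h : ∀ i, C i ≠ 0 ∨ D i ≠ 0)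
    (B : Finset I) (hBcard : B.card ≤ 2) (hBeven : Even B.card) (β : ZMod p)
    (hw : ∃ t s y : ZMod p, β * (∏ i ∈ B, (C i * t + D i * s)) * y ^ 2 = 1) :
    ∃ t s : ZMod p, (∀ i, C i * t + D i * s ≠ 0) ∧
      ∃ w : ZMod p, w ≠ 0 ∧ β * (∏ i ∈ B, (C i * t + D i * s)) = w ^ 2 := by
  haveI : NeZero p := ⟨(Fact.out : p.Prime).ne_zero⟩
  obtain ⟨t₀, s₀, y₀, hw⟩ := hw
  have hβ0 : β ≠ 0 := by
    rintro rfl; rw [zero_mul, zero_mul] at hw; exact zero_ne_one hw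
  have hcard02 : B.card = 0 ∨ B.card = 2 := by
    rcases hBeven with ⟨k, hk⟩; omega
  rcases hcard02 with h0 | h2
  · -- |B| = 0
    have hBe : B = ∅ := Finset.card_eq_zero.mp h0
    subst hBe
    simp only [Finset.prod_empty, mul_one] at hw ⊢
    obtain ⟨τ, hτ⟩ := exists_avoid hp5 hIle C D h
    have hy0 : y₀ ≠ 0 := by rintro rfl; simp at hw
    refine ⟨τ, 1, fun i => by simpa using hτ i, y₀⁻¹, inv_ne_zero hy0, ?_⟩
    field_simp
    linear_combination hw
  · -- |B| = 2
    obtain ⟨i₁, i₂, hne, hBe⟩ := Finset.card_eq_two.mp h2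
    subst hBe
    rw [Finset.prod_pair hne] at hw
    by_cases hΔ : C i₁ * D i₂ - C i₂ * D i₁ = 0
    · -- degenerate: the two B-lines are proportional
      obtain ⟨μ, hμ0, hc2, hd2⟩ :
          ∃ μ : ZMod p, μ ≠ 0 ∧ C i₂ = μ * C i₁ ∧ D i₂ = μ * D i₁ := by
        by_cases hc1 : C i₁ = 0
        · have hd1 : D i₁ ≠ 0 := (h i₁).resolve_left (not_not_intro hc1)
          have hc20 : C i₂ = 0 := by
            have : C i₂ * D i₁ = 0 := by linear_combination -hΔ + s₀ * 0 + (by rw [hc1] : C i₁ = 0) * D i₂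
            exact (mul_eq_zero.mp this).resolve_right hd1
          refine ⟨D i₂ / D i₁, ?_, by rw [hc20, hc1, mul_zero], (div_mul_cancel₀ _ hd1).symm⟩
          intro h0
          have : D i₂ = 0 := by
            have := (div_eq_zero_iff.mp h0).resolve_right hd1
            exact this
          exact (h i₂).elim (fun h' => h' hc20) (fun h' => h' this)
        · refine ⟨C i₂ / C i₁, ?_, (div_mul_cancel₀ _ hc1).symm, ?_⟩
          · intro h0
            have hc20 : C i₂ = 0 := (div_eq_zero_iff.mp h0).resolve_right hc1
            have hd20 : D i₂ = 0 := by
              have : C i₁ * D i₂ = 0 := by linear_combination hΔ + hc20 * D i₁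
              exact (mul_eq_zero.mp this).resolve_left hc1
            exact (h i₂).elim (fun h' => h' hc20) (fun h' => h' hd20)
          · rw [div_mul_eq_mul_div, eq_comm, div_eq_iff hc1]
            linear_combination -hΔ
      set g := (C i₁ * t₀ + D i₁ * s₀) * y₀ with hg
      have hgeq : β * μ * g ^ 2 = 1 := by
        rw [hg]
        rw [hc2, hd2] at hw
        linear_combination hw
      have hg0 : g ≠ 0 := by
        rintro h0
        rw [h0] at hgeq
        simp at hgeq
      obtain ⟨τ, hτ⟩ := exists_avoid hp5 hIle C D h
      have hβμ : β * μ = (g⁻¹) ^ 2 := by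
        field_simp
        linear_combination hgeq
      refine ⟨τ, 1, fun i => by simpa using hτ i, (C i₁ * τ + D i₁) * g⁻¹,
        mul_ne_zero (by simpa using hτ i₁) (inv_ne_zero hg0), ?_⟩
      rw [Finset.prod_pair hne, hc2, hd2]
      linear_combination (C i₁ * τ + D i₁ * 1) ^ 2 * hβμ
    · -- nondegenerate
      set Q : I → Finset (ZMod p) := fun j => Finset.univ.filter
        (fun u => (C j * D i₂ - D j * C i₂) * β * u ^ 2 + (D j * C i₁ - C j * D i₁) = 0) with hQ
      have hQcard : ∀ j, (Q j).card ≤ 2 := by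
        intro j
        by_cases hα : C j * D i₂ - D j * C i₂ = 0
        · have hγ : D j * C i₁ - C j * D i₁ ≠ 0 := by
            intro hγ0
            have hCj : C j = 0 := by
              have hCΔ : C j * (C i₁ * D i₂ - C i₂ * D i₁) = 0 := by
                linear_combination C i₁ * hα + C i₂ * hγ0
              exact (mul_eq_zero.mp hCΔ).resolve_right hΔ
            have hDj : D j = 0 := by
              have hDΔ : D j * (C i₁ * D i₂ - C i₂ * D i₁) = 0 := by
                linear_combination D i₂ * hγ0 + D i₁ * hα
              exact (mul_eq_zero.mp hDΔ).resolve_right hΔ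
            exact (h j).elim (fun h' => h' hCj) (fun h' => h' hDj)
          have hempty : Q j = ∅ := by
            rw [hQ]
            refine Finset.filter_eq_empty_iff.mpr fun u _ => ?_
            intro hcon
            exact hγ (by linear_combination hcon - β * u ^ 2 * hα)
          simp [hempty]
        · have hsub : Q j ⊆ Finset.univ.filter
              (fun u : ZMod p => u ^ 2 =
                -(D j * C i₁ - C j * D i₁) / ((C j * D i₂ - D j * C i₂) * β)) := by
            intro u hu
            simp only [hQ, Finset.mem_filter, Finset.mem_univ, true_and] at hu ⊢
            rw [eq_div_iff (mul_ne_zero hα hβ0)]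
            linear_combination hu
          exact (Finset.card_le_card hsub).trans (sq_fiber_card_le _)
      have hQ1 : (Q i₁).card ≤ 1 := by
        have hsub : Q i₁ ⊆ {0} := by
          intro u hu
          simp only [hQ, Finset.mem_filter, Finset.mem_univ, true_and] at hu
          have h2' : (C i₁ * D i₂ - C i₂ * D i₁) * β * u ^ 2 = 0 := by linear_combination hu
          have hu0 : u = 0 := by
            rcases mul_eq_zero.mp h2' with h' | h'
            · exact absurd ((mul_eq_zero.mp h').resolve_left hΔ) hβ0
            · exact pow_eq_zero_iff (two_ne_zero) |>.mp h'
          simp [hu0]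
        simpa using Finset.card_le_card hsub
      have hQ2 : (Q i₂).card = 0 := by
        rw [Finset.card_eq_zero, hQ]
        refine Finset.filter_eq_empty_iff.mpr fun u _ => ?_
        intro hcon
        exact hΔ (by linear_combination hcon - β * u ^ 2 * (by ring : C i₂ * D i₂ - D i₂ * C i₂ = 0))
      have hpair_card : ({i₁, i₂} : Finset I).card = 2 := by
        rw [Finset.card_insert_of_notMem (by simpa using hne), Finset.card_singleton]
      have hp7 : 7 ≤ p := by
        have hprime : p.Prime := Fact.out
        by_contra hlt
        push_neg at hlt
        have hp6 : p = 6 := by omega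
        rw [hp6] at hprime
        norm_num at hprime
      have hsum : ∑ j, (Q j).card ≤ 5 := by
        have hsplit := Finset.sum_add_sum_compl ({i₁, i₂} : Finset I) fun j => (Q j).card
        have h1 : ∑ j ∈ ({i₁, i₂} : Finset I), (Q j).card ≤ 1 := by
          rw [Finset.sum_pair hne, hQ2]
          omega
        have h2 : ∑ j ∈ ({i₁, i₂} : Finset I)ᶜ, (Q j).card ≤ 4 := by
          have := Finset.sum_le_card_nsmul (({i₁, i₂} : Finset I)ᶜ) (fun j => (Q j).card) 2
            (fun j _ => hQcard j)
          have hcc : (({i₁, i₂} : Finset I)ᶜ).card ≤ 2 := by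
            rw [Finset.card_compl, hpair_card]
            omega
          calc ∑ j ∈ ({i₁, i₂} : Finset I)ᶜ, (Q j).card ≤ (({i₁, i₂} : Finset I)ᶜ).card • 2 := this
            _ ≤ 2 * 2 := by
                rw [smul_eq_mul]
                exact Nat.mul_le_mul_right 2 hcc
            _ = 4 := by norm_num
        omega
      set bad : Finset (ZMod p) := insert 0 (Finset.univ.biUnion Q) with hbad
      have hbadcard : bad.card < Fintype.card (ZMod p) := by
        have h1 := Finset.card_insert_le (0 : ZMod p) (Finset.univ.biUnion Q)
        have h2 : (Finset.univ.biUnion Q).card ≤ ∑ j, (Q j).card := Finset.card_biUnion_le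
        have h3 : Fintype.card (ZMod p) = p := ZMod.card p
        rw [hbad]
        omega
      have hex : ∃ u : ZMod p, u ∉ bad := by
        by_contra hc
        push_neg at hc
        have : bad = Finset.univ := Finset.eq_univ_iff_forall.mpr hc
        rw [this, Finset.card_univ] at hbadcard
        exact lt_irrefl _ hbadcard
      obtain ⟨u, hu⟩ := hex
      have hu0 : u ≠ 0 := fun h0 => hu (by rw [h0, hbad]; exact Finset.mem_insert_self _ _)
      have hβu : β * u ≠ 0 := mul_ne_zero hβ0 hu0
      set v : ZMod p := (β * u)⁻¹ with hv
      have hv1 : β * u * v = 1 := mul_inv_cancel₀ hβu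
      set t : ZMod p := (u * D i₂ - v * D i₁) / (C i₁ * D i₂ - C i₂ * D i₁) with ht
      set s : ZMod p := (v * C i₁ - u * C i₂) / (C i₁ * D i₂ - C i₂ * D i₁) with hs
      have hid : ∀ j, C j * t + D j * s =
          ((C j * D i₂ - D j * C i₂) * u + (D j * C i₁ - C j * D i₁) * v) /
            (C i₁ * D i₂ - C i₂ * D i₁) := by
        intro j
        rw [ht, hs]
        field_simp
        ring
      have hnz : ∀ j, C j * t + D j * s ≠ 0 := by
        intro j hzero
        rw [hid j, div_eq_zero_iff] at hzero
        have hN : (C j * D i₂ - D j * C i₂) * u + (D j * C i₁ - C j * D i₁) * v = 0 :=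
          hzero.resolve_right hΔ
        apply hu
        rw [hbad]
        refine Finset.mem_insert_of_mem (Finset.mem_biUnion.mpr ⟨j, Finset.mem_univ j, ?_⟩)
        simp only [hQ, Finset.mem_filter, Finset.mem_univ, true_and]
        linear_combination β * u * hN - (D j * C i₁ - C j * D i₁) * hv1 + (D j * C i₁ - C j * D i₁) * (by ring : (1:ZMod p) = 1)
      have hval1 : C i₁ * t + D i₁ * s = u := by
        rw [hid i₁, div_eq_iff hΔ]
        ring
      have hval2 : C i₂ * t + D i₂ * s = v := by
        rw [hid i₂, div_eq_iff hΔ]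
        ring
      refine ⟨t, s, hnz, 1, one_ne_zero, ?_⟩
      rw [Finset.prod_pair hne, hval1, hval2, one_pow, ← hv1]
      ring

end KeyF

section PadicAux
variable {p : ℕ} [Fact p.Prime]

lemma toZMod_eq_zero_iff' (x : ℤ_[p]) : PadicInt.toZMod x = 0 ↔ ‖x‖ < 1 := by
  rw [← RingHom.mem_ker, PadicInt.ker_toZMod, IsLocalRing.mem_maximalIdeal,
    PadicInt.mem_nonunits]

lemma norm_eq_one_of_toZMod_ne {x : ℤ_[p]} (h : PadicInt.toZMod x ≠ 0) : ‖x‖ = 1 :=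
  le_antisymm (PadicInt.norm_le_one x) (not_lt.mp fun hlt => h ((toZMod_eq_zero_iff' x).mpr hlt))

lemma exists_sqrt' (hp2 : p ≠ 2) {u : ℤ_[p]} {r : ZMod p} (hr : r ≠ 0)
    (hu : PadicInt.toZMod u = r ^ 2) : ∃ z : ℤ_[p], z ^ 2 = u ∧ ‖z‖ = 1 := by
  haveI : NeZero p := ⟨(Fact.out : p.Prime).ne_zero⟩
  set a₀ : ℤ_[p] := ((r.val : ℕ) : ℤ_[p]) with ha₀
  have hared : PadicInt.toZMod a₀ = r := by
    rw [ha₀, map_natCast]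
    exact ZMod.natCast_rightInverse r
  have ha0 : ‖a₀‖ = 1 := norm_eq_one_of_toZMod_ne (by rw [hared]; exact hr)
  set F : Polynomial ℤ_[p] := Polynomial.X ^ 2 - Polynomial.C u with hF
  have heval : ∀ z : ℤ_[p], F.eval z = z ^ 2 - u := by intro z; simp [hF]
  have hder : F.derivative.eval a₀ = 2 * a₀ := by
    simp [hF, Polynomial.derivative_sub, Polynomial.derivative_X_pow]
    norm_num
  have h2norm : ‖(2 : ℤ_[p])‖ = 1 := by
    apply norm_eq_one_of_toZMod_ne
    have h2 : ((2 : ℕ) : ZMod p) ≠ 0 := by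
      rw [Ne, ZMod.natCast_eq_zero_iff]
      intro hdvd
      exact hp2 ((Nat.prime_dvd_prime_iff_eq (Fact.out : p.Prime) Nat.prime_two).mp hdvd)
    rw [show (2 : ℤ_[p]) = ((2 : ℕ) : ℤ_[p]) by norm_num, map_natCast]
    exact h2
  have hnorm : ‖F.eval a₀‖ < ‖F.derivative.eval a₀‖ ^ 2 := by
    rw [heval, hder, norm_mul, h2norm, ha0]
    norm_num
    exact (toZMod_eq_zero_iff' _).mp (by rw [map_sub, map_pow, hared, hu, sub_self])
  obtain ⟨z, hz, -, -, -⟩ := hensels_lemma hnorm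
  rw [Polynomial.coe_aeval_eq_eval, heval] at hz
  have hz2 : z ^ 2 = u := sub_eq_zero.mp hz
  refine ⟨z, hz2, norm_eq_one_of_toZMod_ne ?_⟩
  intro h0
  have : PadicInt.toZMod u = 0 := by rw [← hz2, map_pow, h0]; ring
  rw [hu] at this
  exact hr (pow_eq_zero_iff two_ne_zero |>.mp this)

end PadicAux
section Main
open Finset

theorem main_padic {p : ℕ} [Fact p.Prime] (hp5 : 5 < p)
    {I : Type*} [Fintype I] [DecidableEq I]
    (hIpos : 0 < Fintype.card I) (hIle : Fintype.card I ≤ 4)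
    (cc dd : I → ℚ)
    (hc1 : ∀ i, ‖((cc i : ℚ) : ℚ_[p])‖ ≤ 1) (hd1 : ∀ i, ‖((dd i : ℚ) : ℚ_[p])‖ ≤ 1)
    (hmax : ∀ i, ‖((cc i : ℚ) : ℚ_[p])‖ = 1 ∨ ‖((dd i : ℚ) : ℚ_[p])‖ = 1)
    (a b : ℚ) (hna : ‖((a : ℚ) : ℚ_[p])‖ < 1) (hnb : ‖((b : ℚ) : ℚ_[p])‖ = 1)
    (A : Finset I) (hAeven : Even A.card) (hBe : Even Aᶜ.card)
    (t s x y : ℚ_[p]) (ht : ‖t‖ ≤ 1) (hs : ‖s‖ ≤ 1) (hx : ‖x‖ ≤ 1) (hy : ‖y‖ ≤ 1)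
    (hts : ‖t‖ = 1 ∨ ‖s‖ = 1)
    (hE : (a : ℚ_[p]) * (∏ j ∈ A, ((cc j : ℚ_[p]) * t + (dd j : ℚ_[p]) * s)) * x ^ 2
        + (b : ℚ_[p]) * (∏ j ∈ Aᶜ, ((cc j : ℚ_[p]) * t + (dd j : ℚ_[p]) * s)) * y ^ 2 = 1) :
    ∃ t' s' x' y' : ℚ_[p], ‖t'‖ ≤ 1 ∧ ‖s'‖ ≤ 1 ∧ ‖x'‖ ≤ 1 ∧ ‖y'‖ ≤ 1 ∧
      (‖t'‖ = 1 ∨ ‖s'‖ = 1) ∧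
      ((a : ℚ_[p]) * (∏ j ∈ A, ((cc j : ℚ_[p]) * t' + (dd j : ℚ_[p]) * s')) * x' ^ 2
        + (b : ℚ_[p]) * (∏ j ∈ Aᶜ, ((cc j : ℚ_[p]) * t' + (dd j : ℚ_[p]) * s')) * y' ^ 2 = 1) ∧
      ‖∏ j ∈ (Finset.univ : Finset I), ((cc j : ℚ_[p]) * t' + (dd j : ℚ_[p]) * s')‖ = 1 := by
  haveI : NeZero p := ⟨(Fact.out : p.Prime).ne_zero⟩
  -- basic norm bound for the linear factors
  have hfac_le : ∀ (i : I) (t₁ s₁ : ℚ_[p]), ‖t₁‖ ≤ 1 → ‖s₁‖ ≤ 1 →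
      ‖(cc i : ℚ_[p]) * t₁ + (dd i : ℚ_[p]) * s₁‖ ≤ 1 := by
    intro i t₁ s₁ ht₁ hs₁
    refine (Padic.nonarchimedean _ _).trans (max_le ?_ ?_)
    · rw [Padic.padicNormE.mul]
      calc ‖((cc i : ℚ) : ℚ_[p])‖ * ‖t₁‖ ≤ 1 * 1 :=
        mul_le_mul (hc1 i) ht₁ (norm_nonneg _) zero_le_one
      _ = 1 := by norm_num
    · rw [Padic.padicNormE.mul]
      calc ‖((dd i : ℚ) : ℚ_[p])‖ * ‖s₁‖ ≤ 1 * 1 :=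
        mul_le_mul (hd1 i) hs₁ (norm_nonneg _) zero_le_one
      _ = 1 := by norm_num
  classical
  by_cases hAe : A = ∅
  · -- the original point already works
    subst hAe
    refine ⟨t, s, x, y, ht, hs, hx, hy, hts, hE, ?_⟩
    rw [Finset.compl_empty] at hE
    have hP_le : ‖∏ j ∈ (Finset.univ : Finset I), ((cc j : ℚ_[p]) * t + (dd j : ℚ_[p]) * s)‖ ≤ 1 := by
      rw [norm_prod]
      exact Finset.prod_le_one (fun i _ => norm_nonneg _) (fun i _ => hfac_le i t s ht hs)
    have hz_lt : ‖(a : ℚ_[p]) * (∏ j ∈ (∅ : Finset I), ((cc j : ℚ_[p]) * t + (dd j : ℚ_[p]) * s)) * x ^ 2‖ < 1 := by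
      rw [Finset.prod_empty, mul_one, Padic.padicNormE.mul, norm_pow]
      calc ‖((a : ℚ) : ℚ_[p])‖ * ‖x‖ ^ 2 ≤ ‖((a : ℚ) : ℚ_[p])‖ * 1 := by
            refine mul_le_mul_of_nonneg_left ?_ (norm_nonneg _)
            calc ‖x‖ ^ 2 ≤ 1 ^ 2 := pow_le_pow_left₀ (norm_nonneg _) hx 2
            _ = 1 := one_pow 2
      _ = ‖((a : ℚ) : ℚ_[p])‖ := mul_one _
      _ < 1 := hna
    set z := (a : ℚ_[p]) * (∏ j ∈ (∅ : Finset I), ((cc j : ℚ_[p]) * t + (dd j : ℚ_[p]) * s)) * x ^ 2 with hz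
    have hone : ‖(b : ℚ_[p]) * (∏ j ∈ (Finset.univ : Finset I), ((cc j : ℚ_[p]) * t + (dd j : ℚ_[p]) * s)) * y ^ 2‖ = 1 := by
      have heq : (b : ℚ_[p]) * (∏ j ∈ (Finset.univ : Finset I), ((cc j : ℚ_[p]) * t + (dd j : ℚ_[p]) * s)) * y ^ 2 = 1 + -z := by
        rw [hz]; linear_combination hE
      rw [heq, Padic.add_eq_max_of_ne, norm_one]
      · simp only [norm_neg]
        exact max_eq_left hz_lt.le
      · rw [norm_one, norm_neg]
        intro hc
        rw [← hc] at hz_lt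
        exact lt_irrefl _ hz_lt
    -- from ‖b * P * y^2‖ = 1 with all factors of norm ≤ 1, get ‖P‖ = 1
    rw [Padic.padicNormE.mul, Padic.padicNormE.mul, hnb, one_mul, norm_pow] at hone
    have hy2 : ‖y‖ ^ 2 ≤ 1 := by
      calc ‖y‖ ^ 2 ≤ 1 ^ 2 := pow_le_pow_left₀ (norm_nonneg _) hy 2
      _ = 1 := one_pow 2
    nlinarith [norm_nonneg (∏ j ∈ (Finset.univ : Finset I), ((cc j : ℚ_[p]) * t + (dd j : ℚ_[p]) * s)), hP_le]
  · -- A is nonempty; we construct a new point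
    -- integral lifts
    set T : ℤ_[p] := ⟨t, ht⟩ with hT
    set S : ℤ_[p] := ⟨s, hs⟩ with hS
    set X : ℤ_[p] := ⟨x, hx⟩ with hX
    set Y : ℤ_[p] := ⟨y, hy⟩ with hY
    set Ab : ℤ_[p] := ⟨((a : ℚ) : ℚ_[p]), hna.le⟩ with hAb
    set Bb : ℤ_[p] := ⟨((b : ℚ) : ℚ_[p]), hnb.le⟩ with hBb
    set Cz : I → ℤ_[p] := fun i => ⟨((cc i : ℚ) : ℚ_[p]), hc1 i⟩ with hCz
    set Dz : I → ℤ_[p] := fun i => ⟨((dd i : ℚ) : ℚ_[p]), hd1 i⟩ with hDz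
    have hcoe_prod : ∀ (J : Finset I) (T₁ S₁ : ℤ_[p]),
        ((∏ j ∈ J, (Cz j * T₁ + Dz j * S₁) : ℤ_[p]) : ℚ_[p])
          = ∏ j ∈ J, ((cc j : ℚ_[p]) * (T₁ : ℚ_[p]) + (dd j : ℚ_[p]) * (S₁ : ℚ_[p])) := by
      intro J T₁ S₁
      rw [show ((∏ j ∈ J, (Cz j * T₁ + Dz j * S₁) : ℤ_[p]) : ℚ_[p])
          = PadicInt.Coe.ringHom (∏ j ∈ J, (Cz j * T₁ + Dz j * S₁)) from rfl, map_prod]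
      exact Finset.prod_congr rfl fun j _ => rfl
    have hEZ : Ab * (∏ j ∈ A, (Cz j * T + Dz j * S)) * X ^ 2
        + Bb * (∏ j ∈ Aᶜ, (Cz j * T + Dz j * S)) * Y ^ 2 = 1 := by
      apply Subtype.ext
      show ((Ab * (∏ j ∈ A, (Cz j * T + Dz j * S)) * X ^ 2
        + Bb * (∏ j ∈ Aᶜ, (Cz j * T + Dz j * S)) * Y ^ 2 : ℤ_[p]) : ℚ_[p]) = ((1 : ℤ_[p]) : ℚ_[p])
      rw [PadicInt.coe_add, PadicInt.coe_mul, PadicInt.coe_mul, PadicInt.coe_mul,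
        PadicInt.coe_mul, PadicInt.coe_pow, PadicInt.coe_pow, PadicInt.coe_one,
        hcoe_prod A T S, hcoe_prod Aᶜ T S]
      exact hE
    -- reduction mod p
    have hared : PadicInt.toZMod Ab = 0 := (toZMod_eq_zero_iff' _).mpr hna
    have hbred : PadicInt.toZMod Bb ≠ 0 := by
      intro h0
      have hlt : ‖((b : ℚ) : ℚ_[p])‖ < 1 := (toZMod_eq_zero_iff' _).mp h0
      rw [hnb] at hlt
      exact lt_irrefl _ hlt
    have hCD : ∀ i, PadicInt.toZMod (Cz i) ≠ 0 ∨ PadicInt.toZMod (Dz i) ≠ 0 := by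
      intro i
      rcases hmax i with h | h
      · left
        intro h0
        have hlt : ‖((cc i : ℚ) : ℚ_[p])‖ < 1 := (toZMod_eq_zero_iff' _).mp h0
        rw [h] at hlt
        exact lt_irrefl _ hlt
      · right
        intro h0
        have hlt : ‖((dd i : ℚ) : ℚ_[p])‖ < 1 := (toZMod_eq_zero_iff' _).mp h0
        rw [h] at hlt
        exact lt_irrefl _ hlt
    have hred : PadicInt.toZMod Bb *
        (∏ j ∈ Aᶜ, (PadicInt.toZMod (Cz j) * PadicInt.toZMod T
          + PadicInt.toZMod (Dz j) * PadicInt.toZMod S)) * (PadicInt.toZMod Y) ^ 2 = 1 := by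
      have hc := congrArg PadicInt.toZMod hEZ
      rw [map_add, map_mul, map_mul, map_mul, map_mul, map_pow, map_pow, map_one, map_prod,
        map_prod, hared, zero_mul, zero_mul, zero_add] at hc
      rw [← hc]
      congr 1
      congr 1
      exact Finset.prod_congr rfl fun j _ => by rw [map_add, map_mul, map_mul]
    -- cardinality facts
    have hA2 : 2 ≤ A.card := by
      rcases hAeven with ⟨k, hk⟩
      have : A.card ≠ 0 := fun h0 => hAe (Finset.card_eq_zero.mp h0)
      omega
    have hBcard : Aᶜ.card ≤ 2 := by
      rw [Finset.card_compl]
      have := Finset.card_le_univ A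
      omega
    -- apply the finite-field lemma
    obtain ⟨tb, sb, hlines, wb, hw0, hsq⟩ := keyF hp5 hIle
      (fun i => PadicInt.toZMod (Cz i)) (fun i => PadicInt.toZMod (Dz i)) hCD
      Aᶜ hBcard hBe (PadicInt.toZMod Bb)
      ⟨PadicInt.toZMod T, PadicInt.toZMod S, PadicInt.toZMod Y, hred⟩
    -- lift the new point
    set T' : ℤ_[p] := ((tb.val : ℕ) : ℤ_[p]) with hT'
    set S' : ℤ_[p] := ((sb.val : ℕ) : ℤ_[p]) with hS'
    have hT'red : PadicInt.toZMod T' = tb := by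
      rw [hT', map_natCast]; exact ZMod.natCast_rightInverse tb
    have hS'red : PadicInt.toZMod S' = sb := by
      rw [hS', map_natCast]; exact ZMod.natCast_rightInverse sb
    have hLred : ∀ i, PadicInt.toZMod (Cz i * T' + Dz i * S')
        = PadicInt.toZMod (Cz i) * tb + PadicInt.toZMod (Dz i) * sb := by
      intro i
      rw [map_add, map_mul, map_mul, hT'red, hS'red]
    have hLnorm : ∀ i, ‖(Cz i * T' + Dz i * S' : ℤ_[p])‖ = 1 := by
      intro i
      exact norm_eq_one_of_toZMod_ne (by rw [hLred i]; exact hlines i)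
    -- square root
    set U : ℤ_[p] := Bb * ∏ j ∈ Aᶜ, (Cz j * T' + Dz j * S') with hU
    have hUred : PadicInt.toZMod U = wb ^ 2 := by
      rw [hU, map_mul, map_prod, ← hsq]
      congr 1
      exact Finset.prod_congr rfl fun j _ => hLred j
    obtain ⟨z, hz2, hznorm⟩ := exists_sqrt' (by omega : p ≠ 2) hw0 hUred
    have hzne : (z : ℚ_[p]) ≠ 0 := by
      intro h0
      have : ‖z‖ = 0 := by rw [PadicInt.norm_def, h0, norm_zero]
      rw [hznorm] at this
      norm_num at this
    -- the new point
    refine ⟨(T' : ℚ_[p]), (S' : ℚ_[p]), 0, (z : ℚ_[p])⁻¹, T'.2, S'.2, by simp, ?_, ?_, ?_, ?_⟩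
    · rw [norm_inv, ← PadicInt.norm_def, hznorm]
      norm_num
    · -- tb and sb are not both zero
      have hi₀ : ∃ i : I, True := by
        obtain ⟨i⟩ := Fintype.card_pos_iff.mp hIpos
        exact ⟨i, trivial⟩
      obtain ⟨i₀, -⟩ := hi₀
      have hnotboth : ¬(tb = 0 ∧ sb = 0) := by
        rintro ⟨rfl, rfl⟩
        exact hlines i₀ (by ring)
      by_cases htb : tb = 0
      · right
        have hsb : sb ≠ 0 := fun h0 => hnotboth ⟨htb, h0⟩
        rw [← PadicInt.norm_def]
        exact norm_eq_one_of_toZMod_ne (by rw [hS'red]; exact hsb)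
      · left
        rw [← PadicInt.norm_def]
        exact norm_eq_one_of_toZMod_ne (by rw [hT'red]; exact htb)
    · -- the equation
      have hUcoe : ((U : ℤ_[p]) : ℚ_[p])
          = (b : ℚ_[p]) * ∏ j ∈ Aᶜ, ((cc j : ℚ_[p]) * (T' : ℚ_[p]) + (dd j : ℚ_[p]) * (S' : ℚ_[p])) := by
        rw [hU, PadicInt.coe_mul, hcoe_prod Aᶜ T' S']
      have hz2' : ((z : ℚ_[p])) ^ 2
          = (b : ℚ_[p]) * ∏ j ∈ Aᶜ, ((cc j : ℚ_[p]) * (T' : ℚ_[p]) + (dd j : ℚ_[p]) * (S' : ℚ_[p])) := by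
        rw [← hUcoe, ← PadicInt.coe_pow, hz2]
      rw [← hz2']
      rw [← mul_pow, mul_inv_cancel₀ hzne, one_pow]
      ring
    · -- the norm of the full product is 1
      rw [norm_prod]
      refine Finset.prod_eq_one fun j _ => ?_
      show ‖((Cz j * T' + Dz j * S' : ℤ_[p]) : ℚ_[p])‖ = 1
      rw [← PadicInt.norm_def]
      exact hLnorm j

end Main
section Wrapper

lemma norm_le_one_of_ZS {p : ℕ} [Fact p.Prime] (S₀ : Finset ℕ) (hpS : p ∉ S₀)
    {q : ℚ} (hq : ∀ p' : ℕ, p'.Prime → p' ∉ S₀ → 0 ≤ padicValRat p' q) :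
    ‖((q : ℚ) : ℚ_[p])‖ ≤ 1 := by
  by_cases hq0 : q = 0
  · simp [hq0]
  · rw [Padic.eq_padicNorm, padicNorm.eq_zpow_of_nonzero hq0]
    have hv : 0 ≤ padicValRat p q := hq p Fact.out hpS
    have hp1 : (1 : ℚ) ≤ (p : ℚ) := by
      have h2 := (Fact.out : p.Prime).two_le
      exact_mod_cast Nat.one_le_of_lt h2
    have : ((p : ℚ)) ^ (-padicValRat p q) ≤ (1 : ℚ) :=
      zpow_le_one_of_nonpos₀ hp1 (neg_nonpos.mpr hv)
    exact_mod_cast this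

lemma max_norm_one {p : ℕ} [Fact p.Prime] (S₀ : Finset ℕ) (hpS : p ∉ S₀)
    {c d : ℚ} (hc : ‖((c : ℚ) : ℚ_[p])‖ ≤ 1) (hd : ‖((d : ℚ) : ℚ_[p])‖ ≤ 1)
    (hcop : CoprimeZS S₀ c d) :
    ‖((c : ℚ) : ℚ_[p])‖ = 1 ∨ ‖((d : ℚ) : ℚ_[p])‖ = 1 := by
  obtain ⟨u, v, hu, hv, huv⟩ := hcop
  have hu1 : ‖((u : ℚ) : ℚ_[p])‖ ≤ 1 := norm_le_one_of_ZS S₀ hpS hu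
  have hv1 : ‖((v : ℚ) : ℚ_[p])‖ ≤ 1 := norm_le_one_of_ZS S₀ hpS hv
  by_contra hcon
  push_neg at hcon
  obtain ⟨hc1, hd1⟩ := hcon
  have hclt : ‖((c : ℚ) : ℚ_[p])‖ < 1 := lt_of_le_of_ne hc hc1
  have hdlt : ‖((d : ℚ) : ℚ_[p])‖ < 1 := lt_of_le_of_ne hd hd1
  have h1 : ((1 : ℚ) : ℚ_[p]) = (u : ℚ_[p]) * (c : ℚ_[p]) + (v : ℚ_[p]) * (d : ℚ_[p]) := by
    rw [← huv]; push_cast; ring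
  have hmax : (1 : ℝ) ≤ max (‖(u : ℚ_[p]) * (c : ℚ_[p])‖) (‖(v : ℚ_[p]) * (d : ℚ_[p])‖) := by
    calc (1 : ℝ) = ‖((1 : ℚ) : ℚ_[p])‖ := by simp
    _ = ‖(u : ℚ_[p]) * (c : ℚ_[p]) + (v : ℚ_[p]) * (d : ℚ_[p])‖ := by rw [h1]
    _ ≤ _ := Padic.nonarchimedean _ _
  have h2 : ‖(u : ℚ_[p]) * (c : ℚ_[p])‖ < 1 := by
    rw [Padic.padicNormE.mul]
    calc ‖((u : ℚ) : ℚ_[p])‖ * ‖((c : ℚ) : ℚ_[p])‖ ≤ 1 * ‖((c : ℚ) : ℚ_[p])‖ :=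
      mul_le_mul_of_nonneg_right hu1 (norm_nonneg _)
    _ = ‖((c : ℚ) : ℚ_[p])‖ := one_mul _
    _ < 1 := hclt
  have h3 : ‖(v : ℚ_[p]) * (d : ℚ_[p])‖ < 1 := by
    rw [Padic.padicNormE.mul]
    calc ‖((v : ℚ) : ℚ_[p])‖ * ‖((d : ℚ) : ℚ_[p])‖ ≤ 1 * ‖((d : ℚ) : ℚ_[p])‖ :=
      mul_le_mul_of_nonneg_right hv1 (norm_nonneg _)
    _ = ‖((d : ℚ) : ℚ_[p])‖ := one_mul _
    _ < 1 := hdlt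
  have := max_lt h2 h3
  linarith

end Wrapper

/-- If `|𝓘| ≤ 4`, `p > 5` is a prime outside `S₀` with `val_p(a) = 1` and `val_p(b) = 0`,
and `E` has an integral `ℤ_p`-point, then it has one with `val_p(p_𝓘(t',s')) = 0`
(equivalently `val_p(d·p_𝓘(t',s')) = 1`). -/
theorem stmt_13 (S₀ : Finset ℕ) (hS₀ : ∀ p ∈ S₀, p.Prime)
    {I : Type*} [Fintype I] [DecidableEq I]
    (hIpos : 0 < Fintype.card I) (hIeven : Even (Fintype.card I))
    (hIle : Fintype.card I ≤ 4)
    (cc dd : I → ℚ) (hcc : ∀ i, cc i ∈ ZS S₀) (hdd : ∀ i, dd i ∈ ZS S₀)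
    (hcop : ∀ i, CoprimeZS S₀ (cc i) (dd i))
    (hΔ : ∀ i j : I, i ≠ j → cc j * dd i - cc i * dd j ≠ 0)
    (a b : ℚ) (ha : a ∈ ZS S₀) (hb : b ∈ ZS S₀) (ha0 : a ≠ 0) (hb0 : b ≠ 0)
    (A : Finset I) (hA : Even A.card) (hB : Even Aᶜ.card)
    (p : ℕ) (hp : p.Prime) (hp5 : 5 < p) (hpS : p ∉ S₀)
    (hva : padicValRat p a = 1) (hvb : padicValRat p b = 0)
    (hpt : ∃ t s x y : Qp p hp, ‖t‖ ≤ 1 ∧ ‖s‖ ≤ 1 ∧ ‖x‖ ≤ 1 ∧ ‖y‖ ≤ 1 ∧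
      (‖t‖ = 1 ∨ ‖s‖ = 1) ∧ EqnE cc dd A a b t s x y) :
    ∃ t' s' x' y' : Qp p hp, ‖t'‖ ≤ 1 ∧ ‖s'‖ ≤ 1 ∧ ‖x'‖ ≤ 1 ∧ ‖y'‖ ≤ 1 ∧
      (‖t'‖ = 1 ∨ ‖s'‖ = 1) ∧ EqnE cc dd A a b t' s' x' y' ∧
      ‖pJ cc dd Finset.univ t' s'‖ = 1 := by
  classical
  letI : Fact p.Prime := ⟨hp⟩
  have hc1 : ∀ i, ‖((cc i : ℚ) : ℚ_[p])‖ ≤ 1 := fun i => norm_le_one_of_ZS S₀ hpS (hcc i)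
  have hd1 : ∀ i, ‖((dd i : ℚ) : ℚ_[p])‖ ≤ 1 := fun i => norm_le_one_of_ZS S₀ hpS (hdd i)
  have hmax : ∀ i, ‖((cc i : ℚ) : ℚ_[p])‖ = 1 ∨ ‖((dd i : ℚ) : ℚ_[p])‖ = 1 :=
    fun i => max_norm_one S₀ hpS (hc1 i) (hd1 i) (hcop i)
  have hp1 : (1 : ℚ) < (p : ℚ) := by exact_mod_cast hp.one_lt
  have hna : ‖((a : ℚ) : ℚ_[p])‖ < 1 := by
    rw [Padic.eq_padicNorm, padicNorm.eq_zpow_of_nonzero ha0, hva]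
    have : ((p : ℚ)) ^ (-(1 : ℤ)) < (1 : ℚ) := by
      rw [zpow_neg, zpow_one]
      exact inv_lt_one_of_one_lt₀ hp1
    exact_mod_cast this
  have hnb : ‖((b : ℚ) : ℚ_[p])‖ = 1 := by
    rw [Padic.eq_padicNorm, padicNorm.eq_zpow_of_nonzero hb0, hvb]
    norm_num
  obtain ⟨t, s, x, y, ht, hs, hx, hy, hts, hEq⟩ := hpt
  exact main_padic hp5 hIpos hIle cc dd hc1 hd1 hmax a b hna hnb A hA hB
    t s x y ht hs hx hy hts hEq
end
end

section
/- Let p be an odd prime such that c_j, d_j ∈ ℤ_p for all j ∈ 𝓘 and val_p(Δ_{i,j}) = 0 for all i ≠ j. Fix i ∈ 𝓘, a unit r ∈ ℤ_p^×, and t, s ∈ ℤ_p with t ≡ r·d_i (mod p·ℤ_p) and s ≡ −r·c_i (mod p·ℤ_p). Then for every subset 𝓙 ⊆ 𝓘 with i ∉ 𝓙, the element p_𝓙(t,s) is a unit of ℤ_p and the quotient p_𝓙(t,s) / (r^{|𝓙|}·p_𝓙(d_i,−c_i)) is a square in ℤ_p^×; consequently, for any c ∈ ℚ_p^×, the elements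 c·p_𝓙(t,s) and c·r^{|𝓙|}·p_𝓙(d_i,−c_i) lie in the same class of ℚ_p^×/(ℚ_p^×)². -/
noncomputable section

theorem rat_norm_le (p : ℕ) [Fact p.Prime] {q : ℚ} (h : 0 ≤ padicValRat p q) :
    ‖(q : ℚ_[p])‖ ≤ 1 := by
  rcases eq_or_ne q 0 with rfl | hq
  · simp
  rw [Padic.eq_padicNorm, padicNorm.eq_zpow_of_nonzero hq]
  have hp1 : (1:ℚ) ≤ (p:ℚ) := by exact_mod_cast (Fact.out : p.Prime).one_lt.le
  have : (p:ℚ) ^ (-padicValRat p q) ≤ 1 := zpow_le_one_of_nonpos₀ hp1 (by omega)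
  exact_mod_cast this

theorem rat_norm_eq (p : ℕ) [Fact p.Prime] {q : ℚ} (hq : q ≠ 0)
    (h : padicValRat p q = 0) : ‖(q : ℚ_[p])‖ = 1 := by
  rw [Padic.eq_padicNorm, padicNorm.eq_zpow_of_nonzero hq, h]
  norm_num

theorem norm_eq_of_sub_lt (p : ℕ) [Fact p.Prime] {a b : ℚ_[p]} (h : ‖a - b‖ < ‖b‖) :
    ‖a‖ = ‖b‖ := by
  have h1 : a = (a - b) + b := by ring
  rw [h1, Padic.add_eq_max_of_ne (ne_of_lt h), max_eq_right h.le]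

theorem prod_sub_one (p : ℕ) [Fact p.Prime] {ι : Type*} (J : Finset ι) (f : ι → ℚ_[p])
    (ε : ℝ) (hε : 0 ≤ ε) (h1 : ∀ j ∈ J, ‖f j‖ ≤ 1) (h2 : ∀ j ∈ J, ‖f j - 1‖ ≤ ε) :
    ‖(∏ j ∈ J, f j) - 1‖ ≤ ε := by
  classical
  induction J using Finset.induction with
  | empty => simpa using hε
  | insert _ _ hnotin ih =>
    rename_i k J'
    rw [Finset.prod_insert hnotin]
    have key : f k * ∏ j ∈ J', f j - 1
        = f k * ((∏ j ∈ J', f j) - 1) + (f k - 1) := by ring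
    rw [key]
    refine le_trans (Padic.nonarchimedean _ _) (max_le ?_ ?_)
    · rw [norm_mul]
      calc ‖f k‖ * ‖(∏ j ∈ J', f j) - 1‖ ≤ 1 * ε := by
            refine mul_le_mul (h1 k (by simp)) ?_ (norm_nonneg _) zero_le_one
            exact ih (fun j hj => h1 j (by simp [hj])) (fun j hj => h2 j (by simp [hj]))
        _ = ε := one_mul ε
    · exact h2 k (by simp)

theorem isSquare_sq_mul {K : Type*} [Field K] (u : K) (hu : u ≠ 0) (y : K) :
    IsSquare (u ^ 2 * y) ↔ IsSquare y := by
  constructor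
  · rintro ⟨v, hv⟩
    refine ⟨v / u, ?_⟩
    field_simp
    rw [sq v, ← hv]; ring
  · rintro ⟨w, hw⟩
    exact ⟨u * w, by rw [hw]; ring⟩
theorem two_norm (p : ℕ) [Fact p.Prime] (hpodd : p ≠ 2) : ‖(2 : ℤ_[p])‖ = 1 := by
  have h1 : ‖(2:ℤ_[p])‖ = ‖((2:ℤ) : ℚ_[p])‖ := by
    rw [PadicInt.norm_def]; norm_cast
  rw [h1]
  refine eq_of_le_of_not_lt (Padic.norm_int_le_one 2) ?_
  rw [Padic.norm_intCast_lt_one_iff]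
  intro h
  have h2 : p ∣ 2 := by exact_mod_cast h
  exact hpodd ((Nat.prime_dvd_prime_iff_eq Fact.out Nat.prime_two).mp h2)

theorem sq_close (p : ℕ) [Fact p.Prime] (hpodd : p ≠ 2) (x : ℚ_[p]) (hx1 : ‖x‖ ≤ 1)
    (hxe : ‖x‖ = 1) (hx : ‖x - 1‖ ≤ (p : ℝ)⁻¹) : ∃ u : ℚ_[p], ‖u‖ = 1 ∧ u ^ 2 = x := by
  have hplt : (p:ℝ)⁻¹ < 1 := by
    rw [inv_lt_one_iff₀]; right; exact_mod_cast (Fact.out : p.Prime).one_lt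
  set a : ℤ_[p] := ⟨x, hx1⟩ with ha
  set F : Polynomial ℤ_[p] := Polynomial.X ^ 2 - Polynomial.C a with hF
  have hd : F.derivative = Polynomial.C 2 * Polynomial.X := by simp [hF]; rw [map_ofNat, one_add_one_eq_two]
  have hnorm : ‖F.eval 1‖ < ‖F.derivative.eval 1‖ ^ 2 := by
    have h2 : ‖F.derivative.eval 1‖ = 1 := by
      rw [hd]; simpa using two_norm p hpodd
    rw [h2]
    have he : F.eval 1 = 1 - a := by simp [hF]
    have hee : ‖F.eval 1‖ = ‖x - 1‖ := by
      rw [he, PadicInt.norm_def, ← norm_neg]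
      push_cast
      ring_nf
      rfl
    rw [hee]
    calc ‖x-1‖ ≤ (p:ℝ)⁻¹ := hx
      _ < 1^2 := by simpa using hplt
  obtain ⟨z, hz, -⟩ := hensels_lemma hnorm
  have hz2 : z ^ 2 = a := by
    have h0 : z^2 - a = 0 := by simpa [hF] using hz
    exact sub_eq_zero.mp h0
  refine ⟨(z : ℚ_[p]), ?_, ?_⟩
  · have hzn : ‖(z:ℚ_[p])‖^2 = 1 := by
      rw [← norm_pow]
      have : ((z:ℚ_[p]))^2 = x := by exact_mod_cast congrArg (PadicInt.Coe.ringHom) hz2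
      rw [this, hxe]
    nlinarith [norm_nonneg ((z:ℚ_[p]))]
  · exact_mod_cast congrArg (PadicInt.Coe.ringHom) hz2
open Finset in
theorem stmt_14' {I : Type*} [Fintype I] [DecidableEq I]
    (cc dd : I → ℚ)
    (p : ℕ) [Fact p.Prime] (hpodd : p ≠ 2)
    (hcc : ∀ j, 0 ≤ padicValRat p (cc j)) (hdd : ∀ j, 0 ≤ padicValRat p (dd j))
    (hΔ : ∀ i j : I, i ≠ j → cc j * dd i - cc i * dd j ≠ 0)
    (hvΔ : ∀ i j : I, i ≠ j → padicValRat p (cc j * dd i - cc i * dd j) = 0)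
    (i : I) (r : ℚ_[p]) (hr : ‖r‖ = 1)
    (t s : ℚ_[p]) (ht : ‖t‖ ≤ 1) (hs : ‖s‖ ≤ 1)
    (htcong : ‖t - r * (dd i : ℚ_[p])‖ ≤ (p : ℝ)⁻¹)
    (hscong : ‖s - r * (-(cc i : ℚ_[p]))‖ ≤ (p : ℝ)⁻¹) :
    ∀ J : Finset I, i ∉ J →
      ‖pJ cc dd J t s‖ = 1 ∧
      (∃ u : ℚ_[p], ‖u‖ = 1 ∧
        pJ cc dd J t s =
          u ^ 2 * (r ^ J.card * ((pJ cc dd J (dd i) (-(cc i)) : ℚ) : ℚ_[p]))) ∧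
      (∀ c : ℚ_[p], c ≠ 0 →
        (IsSquare (c * pJ cc dd J t s) ↔
          IsSquare (c * r ^ J.card * ((pJ cc dd J (dd i) (-(cc i)) : ℚ) : ℚ_[p])))) := by
  intro J hiJ
  have hplt : (p:ℝ)⁻¹ < 1 := by
    rw [inv_lt_one_iff₀]; right; exact_mod_cast (Fact.out : p.Prime).one_lt
  have hpnn : (0:ℝ) ≤ (p:ℝ)⁻¹ := by positivity
  set a : I → ℚ_[p] := fun j => (cc j : ℚ_[p]) * t + (dd j : ℚ_[p]) * s with haa
  set b : I → ℚ_[p] := fun j => r * ((cc j * dd i - cc i * dd j : ℚ) : ℚ_[p]) with hbb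
  have hbnorm : ∀ j ∈ J, ‖b j‖ = 1 := by
    intro j hj
    have hji : i ≠ j := fun h => hiJ (h ▸ hj)
    rw [hbb]; simp only
    rw [norm_mul, hr, one_mul, rat_norm_eq p (hΔ i j hji) (hvΔ i j hji)]
  have hbne : ∀ j ∈ J, b j ≠ 0 := by
    intro j hj h0
    have := hbnorm j hj
    rw [h0] at this; simp at this
  have hdiff : ∀ j ∈ J, ‖a j - b j‖ ≤ (p:ℝ)⁻¹ := by
    intro j hj
    have key : a j - b j
        = (cc j : ℚ_[p]) * (t - r * (dd i : ℚ_[p]))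
          + (dd j : ℚ_[p]) * (s - r * (-(cc i : ℚ_[p]))) := by
      rw [haa, hbb]; push_cast; ring
    rw [key]
    refine le_trans (Padic.nonarchimedean _ _) (max_le ?_ ?_)
    · rw [norm_mul]
      calc ‖(cc j : ℚ_[p])‖ * ‖t - r * (dd i : ℚ_[p])‖ ≤ 1 * (p:ℝ)⁻¹ :=
            mul_le_mul (rat_norm_le p (hcc j)) htcong (norm_nonneg _) zero_le_one
        _ = (p:ℝ)⁻¹ := one_mul _
    · rw [norm_mul]
      calc ‖(dd j : ℚ_[p])‖ * ‖s - r * (-(cc i : ℚ_[p]))‖ ≤ 1 * (p:ℝ)⁻¹ :=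
            mul_le_mul (rat_norm_le p (hdd j)) hscong (norm_nonneg _) zero_le_one
        _ = (p:ℝ)⁻¹ := one_mul _
  have hanorm : ∀ j ∈ J, ‖a j‖ = 1 := by
    intro j hj
    rw [← hbnorm j hj]
    exact norm_eq_of_sub_lt p (by rw [hbnorm j hj]; exact lt_of_le_of_lt (hdiff j hj) hplt)
  have hPncast : ((pJ cc dd J (dd i) (-(cc i)) : ℚ) : ℚ_[p]) = ∏ j ∈ J, ((cc j * dd i - cc i * dd j : ℚ) : ℚ_[p]) := by
    rw [pJ]
    push_cast
    refine Finset.prod_congr rfl fun j _ => by push_cast; ring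
  have hprodb : ∏ j ∈ J, b j = r ^ J.card * ((pJ cc dd J (dd i) (-(cc i)) : ℚ) : ℚ_[p]) := by
    rw [hPncast, hbb, Finset.prod_mul_distrib, Finset.prod_const]
  -- part 1
  have part1 : ‖pJ cc dd J t s‖ = 1 := by
    rw [pJ, norm_prod]
    exact Finset.prod_eq_one fun j hj => hanorm j hj
  -- part 2
  set f : I → ℚ_[p] := fun j => a j / b j with hff
  have hfnorm : ∀ j ∈ J, ‖f j‖ ≤ 1 := by
    intro j hj
    rw [hff]; simp only [norm_div, hanorm j hj, hbnorm j hj]; norm_num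
  have hfsub : ∀ j ∈ J, ‖f j - 1‖ ≤ (p:ℝ)⁻¹ := by
    intro j hj
    have : f j - 1 = (a j - b j) / b j := by
      rw [hff]; simp only; rw [sub_div, div_self (hbne j hj)]
    rw [this, norm_div, hbnorm j hj, div_one]
    exact hdiff j hj
  have hx := prod_sub_one p J f _ hpnn hfnorm hfsub
  have hxnorm : ‖∏ j ∈ J, f j‖ = 1 := by
    rw [norm_prod]
    exact Finset.prod_eq_one fun j hj => by
      rw [hff]; simp only [norm_div, hanorm j hj, hbnorm j hj]; norm_num
  obtain ⟨u, hu1, hu2⟩ := sq_close p hpodd _ (hxnorm.le) hxnorm hx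
  have key : pJ cc dd J t s = u ^ 2 * (r ^ J.card * ((pJ cc dd J (dd i) (-(cc i)) : ℚ) : ℚ_[p])) := by
    rw [pJ, ← hprodb, hu2]
    rw [← Finset.prod_mul_distrib]
    exact Finset.prod_congr rfl fun j hj => (div_mul_cancel₀ _ (hbne j hj)).symm
  refine ⟨part1, ⟨u, hu1, key⟩, ?_⟩
  intro c hc
  have hune : u ≠ 0 := by intro h; rw [h] at hu1; simp at hu1
  have h3 : c * pJ cc dd J t s
      = u ^ 2 * (c * r ^ J.card * ((pJ cc dd J (dd i) (-(cc i)) : ℚ) : ℚ_[p])) := by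
    rw [key]; ring
  rw [h3, isSquare_sq_mul u hune]

/-- If `p` is an odd prime at which all the `c_j, d_j` are integral and all the
`Δ_{i,j}` are units, and `(t,s) ∈ ℤ_p²` is congruent to `(r·d_i, −r·c_i)` mod `p` for a
unit `r`, then for every `𝓙 ⊆ 𝓘` with `i ∉ 𝓙` the element `p_𝓙(t,s)` is a unit of `ℤ_p`,
its quotient by `r^{|𝓙|}·p_𝓙(d_i,−c_i)` is a square in `ℤ_p^×`, and for every
`c ∈ ℚ_p^×` the elements `c·p_𝓙(t,s)` and `c·r^{|𝓙|}·p_𝓙(d_i,−c_i)` lie in the same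
class of `ℚ_p^×/(ℚ_p^×)²`. -/
theorem stmt_14 {I : Type*} [Fintype I] [DecidableEq I]
    (cc dd : I → ℚ) (hnz : ∀ j, cc j ≠ 0 ∨ dd j ≠ 0)
    (p : ℕ) (hp : p.Prime) (hpodd : p ≠ 2)
    (hcc : ∀ j, 0 ≤ padicValRat p (cc j)) (hdd : ∀ j, 0 ≤ padicValRat p (dd j))
    (hΔ : ∀ i j : I, i ≠ j → cc j * dd i - cc i * dd j ≠ 0)
    (hvΔ : ∀ i j : I, i ≠ j → padicValRat p (cc j * dd i - cc i * dd j) = 0)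
    (i : I) (r : Qp p hp) (hr : ‖r‖ = 1)
    (t s : Qp p hp) (ht : ‖t‖ ≤ 1) (hs : ‖s‖ ≤ 1)
    (htcong : ‖t - r * (dd i : Qp p hp)‖ ≤ (p : ℝ)⁻¹)
    (hscong : ‖s - r * (-(cc i : Qp p hp))‖ ≤ (p : ℝ)⁻¹) :
    ∀ J : Finset I, i ∉ J →
      ‖pJ cc dd J t s‖ = 1 ∧
      (∃ u : Qp p hp, ‖u‖ = 1 ∧
        pJ cc dd J t s =
          u ^ 2 * (r ^ J.card * ((pJ cc dd J (dd i) (-(cc i)) : ℚ) : Qp p hp))) ∧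
      (∀ c : Qp p hp, c ≠ 0 →
        (IsSquare (c * pJ cc dd J t s) ↔
          IsSquare (c * r ^ J.card * ((pJ cc dd J (dd i) (-(cc i)) : ℚ) : Qp p hp)))) := by
  letI : Fact p.Prime := ⟨hp⟩
  exact stmt_14' cc dd p hpodd hcc hdd hΔ hvΔ i r hr t s ht hs htcong hscong
end
end

section
/- Let 𝓘 be a nonempty finite index set and for each i ∈ 𝓘 let c_i, d_i ∈ ℚ, not both zero, with Δ_{i,j} := c_j·d_i − c_i·d_j ≠ 0 for all i ≠ j. Let d ∈ ℚ*. Then for every place v of ℚ (ℚ_v = ℚ_p for a prime p, or ℝ) there exist t, s ∈ ℚ_v such that −d·p_𝓘(t,s) is a nonzero square in ℚ_v. -/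
noncomputable section

open Finset

/-- In `ℝ`, for continuous `G` with `G 0 ≠ 0` we can make `-d·x·G(x)` a nonzero square. -/
lemma key_real (G : ℝ → ℝ) (hG : Continuous G) (h0 : G 0 ≠ 0) (d : ℝ) (hd : d ≠ 0) :
    ∃ x r : ℝ, r ≠ 0 ∧ r ^ 2 = -d * (x * G x) := by
  set e : ℝ := (-(d * G 0))⁻¹ with he
  set F : ℝ → ℝ := fun y => -d * e * G (e * y) with hF
  have hF0 : F 0 = 1 := by
    simp only [hF, mul_zero]
    field_simp [he]
    rw [he]; field_simp
  have hFc : Continuous F := by fun_prop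
  obtain ⟨δ, hδ, hball⟩ := Metric.continuousAt_iff.mp (hFc.continuousAt (x := 0))
    (1/2) (by norm_num)
  set y : ℝ := δ / 2 with hy
  have hydist : dist y 0 < δ := by
    rw [Real.dist_eq]
    rw [hy]; rw [abs_of_pos (by linarith)]; simp; linarith
  have hFy : |F y - 1| < 1/2 := by
    have := hball hydist
    rwa [Real.dist_eq, hF0] at this
  have hFypos : 0 < F y := by
    rcases abs_lt.mp hFy with ⟨h1, h2⟩
    linarith
  have hv : 0 < y * F y := mul_pos (by positivity) hFypos
  refine ⟨e * y, Real.sqrt (y * F y), by positivity, ?_⟩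
  rw [Real.sq_sqrt hv.le]
  simp only [hF]
  ring

/-- Every element of `ℚ_p` sufficiently close to `1` is a square (Hensel). -/
lemma padic_sq {p : ℕ} [Fact p.Prime] (c : ℚ_[p])
    (h : ‖c - 1‖ < ‖(2 : ℚ_[p])‖ ^ 2) : ∃ z : ℚ_[p], z ^ 2 = c := by
  have h2 : ‖(2 : ℚ_[p])‖ ≤ 1 := Padic.norm_int_le_one 2
  have hc1 : ‖c - 1‖ < 1 := lt_of_lt_of_le h (by nlinarith [norm_nonneg (2 : ℚ_[p])])
  have hcle : ‖c‖ ≤ 1 := by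
    have := Padic.nonarchimedean (c - 1) 1
    simpa using this.trans (max_le hc1.le (by simp))
  set C : ℤ_[p] := ⟨c, hcle⟩ with hC
  have heval : ‖((Polynomial.X ^ 2 - Polynomial.C C).eval 1 : ℤ_[p])‖ = ‖c - 1‖ := by
    rw [PadicInt.norm_def]
    have : ((Polynomial.X ^ 2 - Polynomial.C C).eval 1 : ℤ_[p]) = 1 - C := by
      simp
    rw [this]
    rw [show ((1 - C : ℤ_[p]) : ℚ_[p]) = 1 - c by push_cast [hC]; rfl]
    rw [norm_sub_rev]
  have hder : (Polynomial.derivative (Polynomial.X ^ 2 - Polynomial.C C)).eval 1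
      = (2 : ℤ_[p]) := by
    simp [Polynomial.derivative_pow]
  have h2' : ‖(2 : ℤ_[p])‖ = ‖(2 : ℚ_[p])‖ := by
    rw [PadicInt.norm_def]; norm_cast
  have key := hensels_lemma (p := p) (R := ℤ_[p]) (F := Polynomial.X ^ 2 - Polynomial.C C) (a := 1)
    (by rw [Polynomial.coe_aeval_eq_eval, heval, hder, h2']; exact h)
  obtain ⟨z, hz, -⟩ := key
  refine ⟨(z : ℚ_[p]), ?_⟩
  have hz' : z ^ 2 - C = 0 := by simpa using hz
  have := congrArg (fun w : ℤ_[p] => (w : ℚ_[p])) hz'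
  push_cast at this
  exact sub_eq_zero.mp this

/-- In `ℚ_p`, for continuous `G` with `G 0 ≠ 0` we can make `-d·x·G(x)` a nonzero square. -/
lemma key_padic {p : ℕ} [Fact p.Prime] (G : ℚ_[p] → ℚ_[p]) (hG : Continuous G)
    (h0 : G 0 ≠ 0) (d : ℚ_[p]) (hd : d ≠ 0) :
    ∃ x r : ℚ_[p], r ≠ 0 ∧ r ^ 2 = -d * (x * G x) := by
  set e : ℚ_[p] := (-(d * G 0))⁻¹ with he
  set F : ℚ_[p] → ℚ_[p] := fun y => -d * e * G (e * y) with hF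
  have hF0 : F 0 = 1 := by
    simp only [hF, mul_zero]
    field_simp [he]
    rw [he]; field_simp
  have hFc : Continuous F := by fun_prop
  have hε : (0:ℝ) < ‖(2 : ℚ_[p])‖ ^ 2 := by
    have : (2 : ℚ_[p]) ≠ 0 := two_ne_zero
    have := norm_pos_iff.mpr this
    positivity
  obtain ⟨δ, hδ, hball⟩ := Metric.continuousAt_iff.mp (hFc.continuousAt (x := 0))
    (‖(2 : ℚ_[p])‖ ^ 2) hε
  have hp1 : ((p : ℝ))⁻¹ < 1 := by
    have := (Fact.out : p.Prime).one_lt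
    rw [inv_lt_one_iff₀]
    right; exact_mod_cast this
  obtain ⟨n, hn⟩ := exists_pow_lt_of_lt_one hδ hp1
  set y : ℚ_[p] := ((p : ℚ_[p]) ^ n) ^ 2 with hy
  have hpne : (p : ℚ_[p]) ≠ 0 := by
    exact_mod_cast (Nat.cast_ne_zero (R := ℚ_[p])).mpr (Fact.out : p.Prime).ne_zero
  have hyne : y ≠ 0 := by simp [hy, hpne]
  have hynorm : ‖y‖ < δ := by
    rw [hy]
    rw [norm_pow, norm_pow, Padic.norm_p]
    have ha0 : (0:ℝ) ≤ (p:ℝ)⁻¹ ^ n := by positivity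
    have ha1 : (p:ℝ)⁻¹ ^ n ≤ 1 := pow_le_one₀ (by positivity) hp1.le
    nlinarith
  have hydist : dist y 0 < δ := by rwa [dist_zero_right]
  have hFy : ‖F y - 1‖ < ‖(2 : ℚ_[p])‖ ^ 2 := by
    have := hball hydist
    rwa [dist_eq_norm, hF0] at this
  obtain ⟨z, hz⟩ := padic_sq (F y) hFy
  have hFyne : F y ≠ 0 := by
    intro hcon
    rw [hcon] at hFy
    have h2 : ‖(2 : ℚ_[p])‖ ≤ 1 := Padic.norm_int_le_one 2
    simp at hFy
    nlinarith [norm_nonneg (2 : ℚ_[p])]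
  refine ⟨e * y, (p : ℚ_[p]) ^ n * z, ?_, ?_⟩
  · intro hcon
    rcases mul_eq_zero.mp hcon with h | h
    · apply hyne; rw [hy, h]; ring
    · apply hFyne; rw [← hz, h]; ring
  · have : ((p : ℚ_[p]) ^ n * z) ^ 2 = y * F y := by
      rw [mul_pow, hz, hy]
    rw [this]
    simp only [hF]
    ring

/-- Reduction: given the square-production property of the field `F`, produce the
required `t, s, r` assuming `cc i₀ ≠ 0`. -/
lemma red {I : Type*} [Fintype I] [DecidableEq I] {F : Type*} [NormedField F] [CharZero F]
    (key : ∀ G : F → F, Continuous G → G 0 ≠ 0 → ∀ d : F, d ≠ 0 →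
      ∃ x r : F, r ≠ 0 ∧ r ^ 2 = -d * (x * G x))
    (cc dd : I → ℚ) (i₀ : I) (hc : cc i₀ ≠ 0)
    (hA : ∀ j, j ≠ i₀ → cc j * dd i₀ - cc i₀ * dd j ≠ 0)
    (d : ℚ) (hd : d ≠ 0) :
    ∃ t s r : F, r ≠ 0 ∧ r ^ 2 = -(d : F) * pJ cc dd Finset.univ t s := by
  have hcF : (cc i₀ : F) ≠ 0 := by exact_mod_cast hc
  set T : F → F := fun x => (dd i₀ : F) + x / (cc i₀ : F) with hT
  set S : F := -(cc i₀ : F) with hS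
  set G : F → F := fun x => ∏ j ∈ univ.erase i₀, ((cc j : F) * T x + (dd j : F) * S)
    with hG
  have hGc : Continuous G := by
    apply continuous_finset_prod
    intro j _
    fun_prop
  have hG0 : G 0 ≠ 0 := by
    rw [hG]
    simp only
    rw [Finset.prod_ne_zero_iff]
    intro j hj
    have := hA j (Finset.mem_erase.mp hj).1
    have hcast : ((cc j : F) * T 0 + (dd j : F) * S)
        = ((cc j * dd i₀ - cc i₀ * dd j : ℚ) : F) := by
      rw [hT, hS]
      push_cast
      field_simp
      ring
    rw [hcast]
    exact_mod_cast this
  have hdF : ((d : F)) ≠ 0 := by exact_mod_cast hd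
  obtain ⟨x, r, hr, heq⟩ := key G hGc hG0 (d : F) hdF
  refine ⟨T x, S, r, hr, ?_⟩
  have hsplit : pJ cc dd Finset.univ (T x) S
      = ((cc i₀ : F) * T x + (dd i₀ : F) * S) * G x := by
    rw [pJ, hG]
    exact (Finset.mul_prod_erase univ _ (mem_univ i₀)).symm
  have hfirst : (cc i₀ : F) * T x + (dd i₀ : F) * S = x := by
    rw [hT, hS]
    field_simp
    ring
  rw [hsplit, hfirst, heq]

/-- The place-uniform statement. -/
lemma main_place {I : Type*} [Fintype I] [Nonempty I] {F : Type*}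
    [NormedField F] [CharZero F]
    (key : ∀ G : F → F, Continuous G → G 0 ≠ 0 → ∀ d : F, d ≠ 0 →
      ∃ x r : F, r ≠ 0 ∧ r ^ 2 = -d * (x * G x))
    (cc dd : I → ℚ) (hnz : ∀ i, cc i ≠ 0 ∨ dd i ≠ 0)
    (hΔ : ∀ i j : I, i ≠ j → cc j * dd i - cc i * dd j ≠ 0)
    (d : ℚ) (hd : d ≠ 0) :
    ∃ t s r : F, r ≠ 0 ∧ r ^ 2 = -(d : F) * pJ cc dd Finset.univ t s := by
  classical
  set i₀ : I := Classical.arbitrary I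
  rcases hnz i₀ with h | h
  · exact red key cc dd i₀ h (fun j hj => hΔ i₀ j (Ne.symm hj)) d hd
  · obtain ⟨t, s, r, hr, heq⟩ := red key dd cc i₀ h
      (fun j hj => by
        have := hΔ i₀ j (Ne.symm hj)
        intro hcon; apply this; linarith) d hd
    refine ⟨s, t, r, hr, ?_⟩
    rw [heq]
    congr 1
    rw [pJ, pJ]
    exact Finset.prod_congr rfl fun j _ => add_comm _ _

/-- For every place `v` of `ℚ` (the real place and every `p`-adic place) there are
`t, s ∈ ℚ_v` such that `−d·p_𝓘(t,s)` is a nonzero square in `ℚ_v`. -/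
theorem stmt_15 {I : Type*} [Fintype I] [Nonempty I]
    (cc dd : I → ℚ) (hnz : ∀ i, cc i ≠ 0 ∨ dd i ≠ 0)
    (hΔ : ∀ i j : I, i ≠ j → cc j * dd i - cc i * dd j ≠ 0)
    (d : ℚ) (hd : d ≠ 0) :
    (∃ t s r : ℝ, r ≠ 0 ∧ r ^ 2 = -(d : ℝ) * pJ cc dd Finset.univ t s) ∧
      (∀ (p : ℕ) (hp : p.Prime), ∃ t s r : Qp p hp, r ≠ 0 ∧
        r ^ 2 = -(d : Qp p hp) * pJ cc dd Finset.univ t s) := by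
  constructor
  · exact main_place key_real cc dd hnz hΔ d hd
  · intro p hp
    letI : Fact p.Prime := ⟨hp⟩
    exact main_place (F := ℚ_[p]) (fun G hG h0 d' hd' => key_padic G hG h0 d' hd')
      cc dd hnz hΔ d hd
end
end
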